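/- arXiv:1704.02595 — 5 statements merged into one kernel-verified Lean document; each statement's English description precedes it below -/
import Mathlib

section
/- Let Γ be a countable group, Z a uniformly recurrent subgroup of Γ, and (X,Γ,α) a Z-proper Γ-system. Then the stabilizer map x ↦ Stab_α(x) is continuous from X to Sub(Γ). -/
/-- Conjugation action of a group on its subgroups: `g • H = gHg⁻¹`. -/
def conjSub {Γ : Type*} [Group Γ] (g : Γ) (H : Subgroup Γ) : Subgroup Γ :=
  Subgroup.map (MulAut.conj g).toMonoidHom H

/-- The Chabauty-type topology on `Sub(Γ)`: the topology induced from the product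
topology on `{0,1}^Γ` via `H ↦ (γ ↦ decide (γ ∈ H))`. -/
noncomputable instance chabauty {Γ : Type*} [Group Γ] : TopologicalSpace (Subgroup Γ) :=
  TopologicalSpace.induced
    (fun H (g : Γ) => @decide (g ∈ H) (Classical.dec _)) inferInstance

/-- A uniformly recurrent subgroup: a nonempty, closed, conjugation-invariant subset of
`Sub(Γ)` on which every conjugation orbit is dense. -/
structure IsURS {Γ : Type*} [Group Γ] (Z : Set (Subgroup Γ)) : Prop where
  nonempty : Z.Nonempty
  closed : IsClosed Z
  invariant : ∀ g : Γ, ∀ H ∈ Z, conjSub g H ∈ Z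
  minimal : ∀ H ∈ Z, ∀ K ∈ Z, K ∈ closure {L : Subgroup Γ | ∃ g : Γ, conjSub g H = L}

/-- The set of elements fixing pointwise some open neighborhood of `x`. -/
def stab0 (Γ : Type*) [Group Γ] {X : Type*} [TopologicalSpace X] [MulAction Γ X]
    (x : X) : Set Γ :=
  {γ : Γ | ∃ U : Set X, IsOpen U ∧ x ∈ U ∧ ∀ y ∈ U, γ • y = y}

/-- A `Γ`-system is `Z`-proper if every stabilizer coincides with the corresponding
neighborhood stabilizer and belongs to `Z`. -/
def IsZProper (Γ : Type*) [Group Γ] {X : Type*} [TopologicalSpace X] [MulAction Γ X]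
    (Z : Set (Subgroup Γ)) : Prop :=
  ∀ x : X, ((MulAction.stabilizer Γ x : Subgroup Γ) : Set Γ) = stab0 Γ x ∧
    MulAction.stabilizer Γ x ∈ Z

/-- for a `Z`-proper system the stabilizer map `x ↦ Stab_α(x)` is continuous
from `X` to `Sub(Γ)`. -/
theorem stabilizer_map_continuous_of_isZProper
    {Γ : Type*} [Group Γ] [Countable Γ]
    {X : Type*} [TopologicalSpace X] [CompactSpace X] [TopologicalSpace.MetrizableSpace X]
    [MulAction Γ X] [ContinuousConstSMul Γ X]
    (Z : Set (Subgroup Γ)) (hZ : IsURS Z) (hproper : IsZProper Γ (X := X) Z) :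
    Continuous (fun x : X => MulAction.stabilizer Γ x) := by
  rw [continuous_induced_rng]
  apply continuous_pi
  intro g
  apply IsLocallyConstant.continuous
  rw [IsLocallyConstant.iff_exists_open]
  intro x
  by_cases hx : g • x = x
  · have hg : g ∈ stab0 Γ x := by
      rw [← (hproper x).1]; exact hx
    obtain ⟨U, hU, hxU, hfix⟩ := hg
    refine ⟨U, hU, hxU, fun y hy => ?_⟩
    simp only [Function.comp_apply]
    have h1 : g ∈ MulAction.stabilizer Γ y := hfix y hy
    have h2 : g ∈ MulAction.stabilizer Γ x := hx
    simp [h1, h2]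
  · have hcl : IsClosed {z : X | g • z = z} := isClosed_eq (continuous_const_smul g) continuous_id
    refine ⟨{z : X | g • z = z}ᶜ, hcl.isOpen_compl, hx, fun y hy => ?_⟩
    simp only [Function.comp_apply]
    have h1 : g ∉ MulAction.stabilizer Γ y := hy
    have h2 : g ∉ MulAction.stabilizer Γ x := hx
    simp [h1, h2]
end

section
/- Let Γ be a finitely generated group and Z a uniformly recurrent subgroup of Γ. Then there exists a Γ-system (X,Γ,α) with X nonempty compact metrizable which is minimal (every orbit is dense in X) and Z-proper; in particular Z is the stability system of a minimal action of Γ. -/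
/-- A `Γ`-system: a nonempty compact metrizable space with a continuous `Γ`-action
(by homeomorphisms). -/
structure GammaSystem (Γ : Type) [Group Γ] where
  X : Type
  [topX : TopologicalSpace X]
  [compactX : CompactSpace X]
  [metrizableX : TopologicalSpace.MetrizableSpace X]
  [nonemptyX : Nonempty X]
  [act : MulAction Γ X]
  [cts : ContinuousConstSMul Γ X]

attribute [instance] GammaSystem.topX GammaSystem.compactX GammaSystem.metrizableX
  GammaSystem.nonemptyX GammaSystem.act GammaSystem.cts

/-- A system is minimal if every orbit is dense. -/
def GammaSystem.Minimal {Γ : Type} [Group Γ] (S : GammaSystem Γ) : Prop :=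
  ∀ x : S.X, Dense {y : S.X | ∃ g : Γ, g • x = y}

section ElekAux
open Topology Pointwise
namespace Elek

variable {Γ : Type*} [Group Γ]

lemma mem_conjSub {g γ : Γ} {H : Subgroup Γ} : γ ∈ conjSub g H ↔ g⁻¹ * γ * g ∈ H := by
  constructor
  · rintro ⟨h, hh, rfl⟩
    simpa [MulAut.conj_apply, mul_assoc] using hh
  · intro h
    exact ⟨g⁻¹ * γ * g, h, by simp [MulAut.conj_apply]; group⟩

lemma conjSub_conjSub (g₁ g₂ : Γ) (H : Subgroup Γ) :
    conjSub g₁ (conjSub g₂ H) = conjSub (g₁ * g₂) H := by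
  ext γ
  simp only [mem_conjSub]
  have h : g₂⁻¹ * (g₁⁻¹ * γ * g₁) * g₂ = (g₁ * g₂)⁻¹ * γ * (g₁ * g₂) := by group
  rw [h]

lemma conjSub_one (H : Subgroup Γ) : conjSub 1 H = H := by
  ext γ; simp [mem_conjSub]

lemma conjSub_of_mem {h : Γ} {H : Subgroup Γ} (hh : h ∈ H) : conjSub h H = H := by
  ext γ
  rw [mem_conjSub]
  constructor
  · intro hm
    have := H.mul_mem (H.mul_mem hh hm) (H.inv_mem hh)
    convert this using 1; group
  · intro hm
    exact H.mul_mem (H.mul_mem (H.inv_mem hh) hm) hh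

/-- The embedding of `Subgroup Γ` into `Γ → Bool`. -/
noncomputable def subEmb : Subgroup Γ → (Γ → Bool) :=
  fun H (g : Γ) => @decide (g ∈ H) (Classical.dec _)

lemma subEmb_isInducing : IsInducing (subEmb (Γ := Γ)) := ⟨rfl⟩

lemma subEmb_injective : Function.Injective (subEmb (Γ := Γ)) := by
  intro H K h
  ext γ
  exact decide_eq_decide.mp (congrFun h γ)

lemma subEmb_isEmbedding : IsEmbedding (subEmb (Γ := Γ)) :=
  ⟨subEmb_isInducing, subEmb_injective⟩

lemma continuous_subEmb : Continuous (subEmb (Γ := Γ)) :=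
  subEmb_isInducing.continuous

lemma isClopen_mem (g : Γ) : IsClopen {H : Subgroup Γ | g ∈ H} := by
  have he : {H : Subgroup Γ | g ∈ H} = subEmb ⁻¹' {f : Γ → Bool | f g = true} := by
    ext H
    simp only [Set.mem_setOf_eq, Set.mem_preimage, subEmb, decide_eq_true_eq]
  rw [he]
  have hc : Continuous fun f : Γ → Bool => f g := continuous_apply g
  have hcl : IsClopen {b : Bool | b = true} := isClopen_discrete _
  exact ⟨(hcl.1.preimage hc).preimage continuous_subEmb,
    (hcl.2.preimage hc).preimage continuous_subEmb⟩

/-- Build a subgroup from a boolean function whose `true`-set is closed under the operations. -/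
def ofFun (f : Γ → Bool) (h1 : f 1 = true)
    (hm : ∀ a b : Γ, f a = true → f b = true → f (a * b) = true)
    (hi : ∀ a : Γ, f a = true → f a⁻¹ = true) : Subgroup Γ :=
  ⟨⟨⟨{g | f g = true}, fun {a b} ha hb => hm a b ha hb⟩, h1⟩, fun {a} ha => hi a ha⟩

lemma mem_ofFun {f : Γ → Bool} {h1 hm hi} {g : Γ} : g ∈ ofFun f h1 hm hi ↔ f g = true :=
  Iff.rfl

lemma isClopen_coordFn (a : Γ) (b : Bool) : IsClopen {f : Γ → Bool | f a = b} := by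
  have he : {f : Γ → Bool | f a = b} = (fun f : Γ → Bool => f a) ⁻¹' {b} := rfl
  rw [he]
  exact (isClopen_discrete _).preimage (continuous_apply a)

lemma isClosed_range_subEmb : IsClosed (Set.range (subEmb (Γ := Γ))) := by
  have key : Set.range (subEmb (Γ := Γ)) =
      {f : Γ → Bool | f 1 = true} ∩
      ({f : Γ → Bool | ∀ a b : Γ, f a = true → f b = true → f (a * b) = true} ∩
       {f : Γ → Bool | ∀ a : Γ, f a = true → f a⁻¹ = true}) := by
    ext f
    constructor
    · rintro ⟨H, rfl⟩
      refine ⟨@decide_eq_true _ (Classical.dec _) H.one_mem,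
        fun a b ha hb => ?_, fun a ha => ?_⟩
      · simp only [subEmb, decide_eq_true_eq] at *
        exact H.mul_mem ha hb
      · simp only [subEmb, decide_eq_true_eq] at *
        exact H.inv_mem ha
    · rintro ⟨h1, hm, hi⟩
      refine ⟨ofFun f h1 hm hi, ?_⟩
      funext g
      rcases Bool.eq_false_or_eq_true (f g) with hfg | hfg
      · rw [hfg]
        exact @decide_eq_true _ (Classical.dec _) (mem_ofFun.mpr hfg)
      · rw [hfg]
        apply @decide_eq_false _ (Classical.dec _)
        intro hp
        rw [mem_ofFun] at hp
        rw [hp] at hfg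
        exact Bool.noConfusion hfg
  rw [key]
  refine IsClosed.inter ?_ (IsClosed.inter ?_ ?_)
  · exact (isClopen_coordFn 1 true).1
  · have he : {f : Γ → Bool | ∀ a b : Γ, f a = true → f b = true → f (a * b) = true} =
        ⋂ (a : Γ), ⋂ (b : Γ),
          ({f : Γ → Bool | f a = true}ᶜ ∪ ({f | f b = true}ᶜ ∪ {f | f (a*b) = true})) := by
      ext f
      simp only [Set.mem_setOf_eq, Set.mem_iInter, Set.mem_union, Set.mem_compl_iff]
      constructor
      · intro h a b
        by_cases ha : f a = true
        · by_cases hb : f b = true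
          · exact Or.inr (Or.inr (h a b ha hb))
          · exact Or.inr (Or.inl hb)
        · exact Or.inl ha
      · intro h a b ha hb
        rcases h a b with h' | h' | h'
        · exact absurd ha h'
        · exact absurd hb h'
        · exact h'
    rw [he]
    refine isClosed_iInter fun a => isClosed_iInter fun b => ?_
    refine IsClosed.union ?_ (IsClosed.union ?_ ?_)
    · exact (isClopen_coordFn a true).compl.1
    · exact (isClopen_coordFn b true).compl.1
    · exact (isClopen_coordFn (a*b) true).1
  · have he : {f : Γ → Bool | ∀ a : Γ, f a = true → f a⁻¹ = true} =
        ⋂ (a : Γ), ({f : Γ → Bool | f a = true}ᶜ ∪ {f | f a⁻¹ = true}) := by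
      ext f
      simp only [Set.mem_setOf_eq, Set.mem_iInter, Set.mem_union, Set.mem_compl_iff]
      constructor
      · intro h a
        by_cases ha : f a = true
        · exact Or.inr (h a ha)
        · exact Or.inl ha
      · intro h a ha
        rcases h a with h' | h'
        · exact absurd ha h'
        · exact h'
    rw [he]
    refine isClosed_iInter fun a => ?_
    exact IsClosed.union (isClopen_coordFn a true).compl.1 (isClopen_coordFn a⁻¹ true).1

instance : CompactSpace (Subgroup Γ) := by
  rw [← isCompact_univ_iff, subEmb_isInducing.isCompact_iff, Set.image_univ]
  exact isClosed_range_subEmb.isCompact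

instance : T3Space (Subgroup Γ) := subEmb_isEmbedding.t3Space

instance [Countable Γ] : SecondCountableTopology (Subgroup Γ) :=
  subEmb_isEmbedding.secondCountableTopology

example [Countable Γ] : TopologicalSpace.MetrizableSpace (Subgroup Γ) := inferInstance






lemma countable_of_fg (Γ : Type) [Group Γ] [hfg : Group.FG Γ] : Countable Γ := by
  obtain ⟨S, hScl, hSfin⟩ := Group.fg_iff.mp hfg
  set T : Set Γ := S ∪ S⁻¹ with hT
  have hTfin : T.Finite := hSfin.union hSfin.inv
  have : Countable ↥T := hTfin.countable.to_subtype
  have hsurj : Function.Surjective (fun l : List ↥T => (l.map Subtype.val).prod) := by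
    intro γ
    have hγ : γ ∈ Submonoid.closure T := by
      have h1 : γ ∈ (Subgroup.closure S).toSubmonoid := by
        rw [hScl]; trivial
      rwa [Subgroup.closure_toSubmonoid] at h1
    obtain ⟨l, hl, hprod⟩ := Submonoid.exists_list_of_mem_closure hγ
    refine ⟨l.pmap (fun x hx => (⟨x, hx⟩ : ↥T)) hl, ?_⟩
    simp only [List.map_pmap]
    rw [List.pmap_eq_map]
    simpa using hprod
  exact hsurj.countable

section Greedy

variable {V : Type} (k : ℕ) (ι : V → ℕ) (A : V → Finset V)

lemma exists_fresh (s : Finset (Fin k)) (h : s.card < k) : ∃ c : Fin k, c ∉ s := by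
  by_contra h'
  push_neg at h'
  have hsub : (Finset.univ : Finset (Fin k)) ⊆ s := fun c _ => h' c
  have := Finset.card_le_card hsub
  simp only [Finset.card_univ, Fintype.card_fin] at this
  omega

variable (hcard : ∀ x, (A x).card < k)

noncomputable def G : (n : ℕ) → ∀ x : V, ι x < n → Fin k
  | 0 => fun _ h => absurd h (Nat.not_lt_zero _)
  | n + 1 => fun x _ =>
    if hx : ι x < n then G n x hx
    else Classical.choose (exists_fresh k
      ((A x).attach.image fun y =>
        if hy : ι y.1 < n then G n y.1 hy else ⟨0, Nat.lt_of_le_of_lt (Nat.zero_le _) (hcard x)⟩)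
      (Finset.card_image_le.trans_lt (by rw [Finset.card_attach]; exact hcard x)))

lemma G_succ_lt {n : ℕ} {x : V} (hx : ι x < n) (h : ι x < n + 1) :
    G k ι A hcard (n + 1) x h = G k ι A hcard n x hx := by
  simp [G, dif_pos hx]

lemma G_mono : ∀ (n m : ℕ) (x : V) (h : ι x < m) (_ : m ≤ n) (h' : ι x < n),
    G k ι A hcard n x h' = G k ι A hcard m x h := by
  intro n
  induction n with
  | zero => intro m x h hmn h'; exact absurd h' (Nat.not_lt_zero _)
  | succ n ih =>
    intro m x h hmn h'
    rcases Nat.lt_or_ge (ι x) n with hx | hx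
    · rw [G_succ_lt k ι A hcard hx h']
      rcases Nat.eq_or_lt_of_le hmn with rfl | hmn'
      · rw [G_succ_lt k ι A hcard hx h]
      · exact ih m x h (Nat.lt_succ_iff.mp hmn') hx
    · -- ι x ≥ n, and ι x < m ≤ n+1 so m = n+1
      have hm : m = n + 1 := le_antisymm hmn (by omega)
      subst hm
      rfl

noncomputable def greedy (x : V) : Fin k := G k ι A hcard (ι x + 1) x (Nat.lt_succ_self _)

lemma G_eq_greedy {n : ℕ} {x : V} (h : ι x < n) : G k ι A hcard n x h = greedy k ι A hcard x :=
  G_mono k ι A hcard n (ι x + 1) x (Nat.lt_succ_self _) h h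

lemma greedy_proper_aux {x y : V}
    (hxy : y ∈ A x) (hlt : ι y < ι x) : greedy k ι A hcard x ≠ greedy k ι A hcard y := by
  have hnot : ¬ ι x < ι x := lt_irrefl _
  have hx : greedy k ι A hcard x = Classical.choose (exists_fresh k
      ((A x).attach.image fun y =>
        if hy : ι y.1 < ι x then G k ι A hcard (ι x) y.1 hy
        else ⟨0, Nat.lt_of_le_of_lt (Nat.zero_le _) (hcard x)⟩)
      (Finset.card_image_le.trans_lt (by rw [Finset.card_attach]; exact hcard x))) := by
    unfold greedy
    simp [G, dif_neg hnot]
  have hspec := Classical.choose_spec (exists_fresh k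
      ((A x).attach.image fun y =>
        if hy : ι y.1 < ι x then G k ι A hcard (ι x) y.1 hy
        else ⟨0, Nat.lt_of_le_of_lt (Nat.zero_le _) (hcard x)⟩)
      (Finset.card_image_le.trans_lt (by rw [Finset.card_attach]; exact hcard x)))
  intro heq
  apply hspec
  rw [← hx, heq]
  refine Finset.mem_image.mpr ⟨⟨y, hxy⟩, Finset.mem_attach _ _, ?_⟩
  rw [dif_pos hlt]
  exact G_eq_greedy k ι A hcard hlt

end Greedy

lemma exists_coloring {V : Type} [Countable V] (k : ℕ) (A : V → Finset V)
    (hcard : ∀ x, (A x).card < k) (hirr : ∀ x, x ∉ A x)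
    (hsym : ∀ x y, y ∈ A x → x ∈ A y) :
    ∃ c : V → Fin k, ∀ x, ∀ y ∈ A x, c x ≠ c y := by
  obtain ⟨ι, hι⟩ := exists_injective_nat V
  refine ⟨greedy k ι A hcard, fun x y hy => ?_⟩
  have hne : x ≠ y := fun h => hirr x (h ▸ hy)
  rcases Nat.lt_or_ge (ι y) (ι x) with hlt | hge
  · exact greedy_proper_aux k ι A hcard hy hlt
  · have hlt : ι x < ι y := lt_of_le_of_ne hge (fun h => hne (hι h))
    exact (greedy_proper_aux k ι A hcard (hsym x y hy) hlt).symm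


-- PART 3
section Sigma

variable {C : Type*}

/-- The shift action on pairs (subgroup, coloring). -/
def σ (g : Γ) (p : Subgroup Γ × (Γ → C)) : Subgroup Γ × (Γ → C) :=
  (conjSub g p.1, fun γ => p.2 (γ * g))

lemma σ_one (p : Subgroup Γ × (Γ → C)) : σ 1 p = p := by
  refine Prod.ext (conjSub_one _) (funext fun γ => ?_)
  simp [σ]

lemma σ_mul (g₁ g₂ : Γ) (p : Subgroup Γ × (Γ → C)) : σ (g₁ * g₂) p = σ g₁ (σ g₂ p) := by
  refine Prod.ext ?_ (funext fun γ => ?_)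
  · exact (conjSub_conjSub g₁ g₂ p.1).symm
  · show p.2 (γ * (g₁ * g₂)) = p.2 (γ * g₁ * g₂)
    rw [mul_assoc]

lemma continuous_conjSubFun (g : Γ) : Continuous fun H : Subgroup Γ => conjSub g H := by
  rw [show (chabauty : TopologicalSpace (Subgroup Γ)) =
    TopologicalSpace.induced subEmb inferInstance from rfl] at *
  apply continuous_induced_rng.mpr
  have he : (fun H : Subgroup Γ => subEmb (conjSub g H)) =
      fun H γ => subEmb H (g⁻¹ * γ * g) := by
    funext H γ
    exact decide_eq_decide.mpr mem_conjSub
  show Continuous fun H : Subgroup Γ => subEmb (conjSub g H)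
  rw [he]
  exact continuous_pi fun γ => (continuous_apply (g⁻¹ * γ * g)).comp continuous_subEmb

lemma σ_continuous [TopologicalSpace C] (g : Γ) :
    Continuous (σ g : Subgroup Γ × (Γ → C) → Subgroup Γ × (Γ → C)) := by
  apply Continuous.prodMk
  · exact (continuous_conjSubFun g).comp continuous_fst
  · exact continuous_pi fun γ => (continuous_apply (γ * g)).comp continuous_snd

end Sigma

/-- Existence of a minimal nonempty closed invariant subset, plus density of orbit closures. -/
lemma exists_minimal_invt {P : Type*} [TopologicalSpace P] [CompactSpace P]
    {G : Type*} [Monoid G] (T : G → P → P) (hTc : ∀ g, Continuous (T g))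
    (hT1 : ∀ p, T 1 p = p) (hTm : ∀ g h p, T g (T h p) = T (g * h) p)
    (X : Set P) (hXc : IsClosed X) (hXne : X.Nonempty)
    (hXinv : ∀ g, ∀ p ∈ X, T g p ∈ X) :
    ∃ M ⊆ X, M.Nonempty ∧ IsClosed M ∧ (∀ g, ∀ p ∈ M, T g p ∈ M) ∧
      ∀ p ∈ M, closure {q | ∃ g, T g p = q} = M := by
  set S : Set (Set P) := {A | A ⊆ X ∧ A.Nonempty ∧ IsClosed A ∧ ∀ g, ∀ p ∈ A, T g p ∈ A} with hS
  have hXS : X ∈ S := ⟨le_rfl, hXne, hXc, hXinv⟩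
  obtain ⟨M, hMX, hMS, hMmin⟩ : ∃ M, M ⊆ X ∧ M ∈ S ∧ ∀ A ∈ S, A ⊆ M → A = M := by
    have hchainlb : ∀ c ⊆ S, IsChain (· ⊆ ·) c → c.Nonempty → ∃ lb ∈ S, ∀ s ∈ c, lb ⊆ s := by
      intro c hcS hchain hcne
      refine ⟨⋂₀ c, ?_, fun s hs => Set.sInter_subset_of_mem hs⟩
      obtain ⟨s₀, hs₀⟩ := hcne
      have hne : (⋂₀ c).Nonempty := by
        rw [Set.sInter_eq_iInter]
        haveI : Nonempty ↥c := ⟨⟨s₀, hs₀⟩⟩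
        apply IsCompact.nonempty_iInter_of_directed_nonempty_isCompact_isClosed
        · intro s t
          rcases hchain.total s.2 t.2 with h | h
          · exact ⟨s, le_rfl, h⟩
          · exact ⟨t, h, le_rfl⟩
        · exact fun s => (hcS s.2).2.1
        · exact fun s => (hcS s.2).2.2.1.isCompact
        · exact fun s => (hcS s.2).2.2.1
      refine ⟨fun p hp => (hcS hs₀).1 (hp s₀ hs₀), hne,
        isClosed_sInter fun s hs => (hcS hs).2.2.1, ?_⟩
      intro g p hp s hs
      exact (hcS hs).2.2.2 g p (hp s hs)
    obtain ⟨M, hMX, hMmin⟩ := zorn_superset_nonempty S hchainlb X hXS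
    exact ⟨M, hMX, hMmin.prop, fun A hA hAM => (hMmin.eq_of_le hA hAM)⟩
  obtain ⟨hMsubX, hMne, hMcl, hMinv⟩ := hMS
  refine ⟨M, hMsubX, hMne, hMcl, hMinv, fun p hp => ?_⟩
  set O : Set P := {q | ∃ g, T g p = q} with hO
  have hOM : O ⊆ M := by rintro q ⟨g, rfl⟩; exact hMinv g p hp
  have hclOM : closure O ⊆ M := closure_minimal hOM hMcl
  refine hMmin (closure O) ⟨hclOM.trans hMsubX, ⟨p, subset_closure ⟨1, hT1 p⟩⟩,
    isClosed_closure, ?_⟩ hclOM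
  intro g q hq
  have h1 : T g '' closure O ⊆ closure (T g '' O) := image_closure_subset_closure_image (hTc g)
  have h2 : T g '' O ⊆ O := by
    rintro _ ⟨_, ⟨h, rfl⟩, rfl⟩
    exact ⟨g * h, (hTm g h p).symm⟩
  exact closure_mono h2 (h1 ⟨q, hq, rfl⟩)



end Elek
end ElekAux

/-- every URS of a finitely generated group is the stability system of a
minimal `Z`-proper system. -/
theorem exists_minimal_isZProper_system
    {Γ : Type} [Group Γ] [Group.FG Γ]
    (Z : Set (Subgroup Γ)) (hZ : IsURS Z) :
    ∃ S : GammaSystem Γ, S.Minimal ∧ IsZProper Γ (X := S.X) Z := by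
  classical
  haveI : Countable Γ := Elek.countable_of_fg Γ
  haveI : Nonempty Γ := ⟨1⟩
  obtain ⟨e, he⟩ := exists_surjective_nat Γ
  -- a covering family of finite symmetric subsets of Γ
  set B : ℕ → Finset Γ := fun r =>
    ((Finset.range (r+1)).image e) ∪ ((Finset.range (r+1)).image e).image (fun u => u⁻¹)
    with hB
  have hcover : ∀ g : Γ, ∃ r, g ∈ B r := by
    intro g
    obtain ⟨n, rfl⟩ := he g
    exact ⟨n, Finset.mem_union_left _
      (Finset.mem_image.mpr ⟨n, Finset.mem_range.mpr (Nat.lt_succ_self n), rfl⟩)⟩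
  have hsymB : ∀ r : ℕ, ∀ u ∈ B r, u⁻¹ ∈ B r := by
    intro r u hu
    rcases Finset.mem_union.mp hu with h | h
    · exact Finset.mem_union_right _ (Finset.mem_image.mpr ⟨u, h, rfl⟩)
    · obtain ⟨v, hv, rfl⟩ := Finset.mem_image.mp h
      exact Finset.mem_union_left _ (by simpa using hv)
  set k : ℕ → ℕ := fun r => (B r).card + 1 with hk
  set P := Subgroup Γ × (Γ → ∀ r : ℕ, Fin (k r)) with hP
  -- the closed invariant set of admissible pairs
  set X : Set P := {p | p.1 ∈ Z ∧ (∀ γ h : Γ, h ∈ p.1 → p.2 (γ * h) = p.2 γ) ∧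
    (∀ r : ℕ, ∀ γ : Γ, ∀ u ∈ B r, γ⁻¹ * u * γ ∉ p.1 → p.2 (u * γ) r ≠ p.2 γ r)} with hXdef
  -- X is closed
  have hXclosed : IsClosed X := by
    have h0 : IsClosed {p : P | p.1 ∈ Z} := hZ.closed.preimage continuous_fst
    have h1 : IsClosed {p : P | ∀ γ h : Γ, h ∈ p.1 → p.2 (γ * h) = p.2 γ} := by
      have he1 : {p : P | ∀ γ h : Γ, h ∈ p.1 → p.2 (γ * h) = p.2 γ} =
          ⋂ (γ : Γ), ⋂ (h : Γ),
            ({p : P | h ∈ p.1}ᶜ ∪ {p : P | p.2 (γ * h) = p.2 γ}) := by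
        ext p
        simp only [Set.mem_setOf_eq, Set.mem_iInter, Set.mem_union, Set.mem_compl_iff]
        constructor
        · intro hp γ h
          by_cases hh : h ∈ p.1
          · exact Or.inr (hp γ h hh)
          · exact Or.inl hh
        · intro hp γ h hh
          rcases hp γ h with h' | h'
          · exact absurd hh h'
          · exact h'
      rw [he1]
      refine isClosed_iInter fun γ => isClosed_iInter fun h => IsClosed.union ?_ ?_
      · exact (((Elek.isClopen_mem h).preimage continuous_fst).2).isClosed_compl
      · exact isClosed_eq ((continuous_apply (γ * h)).comp continuous_snd)
          ((continuous_apply γ).comp continuous_snd)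
    have h2 : IsClosed {p : P | ∀ r : ℕ, ∀ γ : Γ, ∀ u ∈ B r,
        γ⁻¹ * u * γ ∉ p.1 → p.2 (u * γ) r ≠ p.2 γ r} := by
      have he2 : {p : P | ∀ r : ℕ, ∀ γ : Γ, ∀ u ∈ B r,
          γ⁻¹ * u * γ ∉ p.1 → p.2 (u * γ) r ≠ p.2 γ r} =
          ⋂ (r : ℕ), ⋂ (γ : Γ), ⋂ (u : Γ),
            {p : P | u ∈ B r → γ⁻¹ * u * γ ∉ p.1 → p.2 (u * γ) r ≠ p.2 γ r} := by
        ext p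
        simp only [Set.mem_setOf_eq, Set.mem_iInter]
      rw [he2]
      refine isClosed_iInter fun r => isClosed_iInter fun γ => isClosed_iInter fun u => ?_
      by_cases hu : u ∈ B r
      · have he3 : {p : P | u ∈ B r → γ⁻¹ * u * γ ∉ p.1 → p.2 (u * γ) r ≠ p.2 γ r} =
            {p : P | γ⁻¹ * u * γ ∈ p.1} ∪ {p : P | p.2 (u * γ) r ≠ p.2 γ r} := by
          ext p
          simp only [Set.mem_setOf_eq, Set.mem_union, hu, true_implies]
          constructor
          · intro hp
            by_cases hm : γ⁻¹ * u * γ ∈ p.1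
            · exact Or.inl hm
            · exact Or.inr (hp hm)
          · intro hp hm
            rcases hp with h' | h'
            · exact absurd h' hm
            · exact h'
        rw [he3]
        refine IsClosed.union ?_ ?_
        · exact ((Elek.isClopen_mem (γ⁻¹ * u * γ)).preimage continuous_fst).1
        · have he4 : {p : P | p.2 (u * γ) r ≠ p.2 γ r} =
              (fun p : P => (p.2 (u * γ) r, p.2 γ r)) ⁻¹'
                {q : Fin (k r) × Fin (k r) | q.1 ≠ q.2} := rfl
          rw [he4]
          refine (isClosed_discrete _).preimage ?_
          exact Continuous.prodMk
            ((continuous_apply r).comp ((continuous_apply (u * γ)).comp continuous_snd))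
            ((continuous_apply r).comp ((continuous_apply γ).comp continuous_snd))
      · have he3 : {p : P | u ∈ B r → γ⁻¹ * u * γ ∉ p.1 → p.2 (u * γ) r ≠ p.2 γ r} =
            Set.univ := by
          ext p
          simp [hu]
        rw [he3]
        exact isClosed_univ
    have heX : X = {p : P | p.1 ∈ Z} ∩ ({p : P | ∀ γ h : Γ, h ∈ p.1 → p.2 (γ * h) = p.2 γ} ∩
        {p : P | ∀ r : ℕ, ∀ γ : Γ, ∀ u ∈ B r,
          γ⁻¹ * u * γ ∉ p.1 → p.2 (u * γ) r ≠ p.2 γ r}) := by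
      ext p
      simp only [hXdef, Set.mem_setOf_eq, Set.mem_inter_iff]
    rw [heX]
    exact h0.inter (h1.inter h2)
  -- X is invariant
  have hXinv : ∀ g : Γ, ∀ p ∈ X, Elek.σ g p ∈ X := by
    rintro g p ⟨hz, ha, hb⟩
    refine ⟨hZ.invariant g _ hz, ?_, ?_⟩
    · intro γ h hh
      replace hh : g⁻¹ * h * g ∈ p.1 := Elek.mem_conjSub.mp hh
      show p.2 (γ * h * g) = p.2 (γ * g)
      have hrw : γ * h * g = (γ * g) * (g⁻¹ * h * g) := by group
      rw [hrw]
      exact ha (γ * g) (g⁻¹ * h * g) hh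
    · intro r γ u hu hnot
      show p.2 (u * γ * g) r ≠ p.2 (γ * g) r
      have hnot' : (γ * g)⁻¹ * u * (γ * g) ∉ p.1 := by
        intro hmem
        apply hnot
        show γ⁻¹ * u * γ ∈ conjSub g p.1
        rw [Elek.mem_conjSub]
        have hrw : g⁻¹ * (γ⁻¹ * u * γ) * g = (γ * g)⁻¹ * u * (γ * g) := by group
        rw [hrw]
        exact hmem
      have := hb r (γ * g) u hu hnot'
      have hrw2 : u * (γ * g) = u * γ * g := by group
      rw [hrw2] at this
      exact this
  -- X is nonempty : build a point over some H₀ ∈ Z by greedy colorings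
  obtain ⟨H₀, hH₀⟩ := hZ.nonempty
  haveI : Countable (Γ ⧸ H₀) :=
    inferInstanceAs (Countable (Quotient (QuotientGroup.leftRel H₀)))
  have hexcol : ∀ r : ℕ, ∃ col : (Γ ⧸ H₀) → Fin (k r),
      ∀ x : Γ ⧸ H₀, ∀ y ∈ (((B r).image (fun u => u • x)).erase x), col x ≠ col y := by
    intro r
    apply Elek.exists_coloring
    · intro x
      exact (Finset.card_erase_le.trans Finset.card_image_le).trans_lt (Nat.lt_succ_self _)
    · intro x
      exact Finset.notMem_erase _ _
    · intro x y hy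
      obtain ⟨hne, hmem⟩ := Finset.mem_erase.mp hy
      obtain ⟨u, hu, huy⟩ := Finset.mem_image.mp hmem
      refine Finset.mem_erase.mpr ⟨?_, Finset.mem_image.mpr ⟨u⁻¹, hsymB r u hu, ?_⟩⟩
      · intro hxy
        exact hne (by rw [← hxy])
      · rw [← huy, inv_smul_smul]
  choose col hcol using hexcol
  set c : Γ → ∀ r : ℕ, Fin (k r) := fun γ r => col r (QuotientGroup.mk γ) with hc
  have hp₀ : ((H₀, c) : P) ∈ X := by
    refine ⟨hH₀, ?_, ?_⟩
    · intro γ h hh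
      show c (γ * h) = c γ
      funext r
      show col r (QuotientGroup.mk (γ * h)) = col r (QuotientGroup.mk γ)
      rw [QuotientGroup.mk_mul_of_mem γ hh]
    · intro r γ u hu hnot
      show col r (QuotientGroup.mk (u * γ)) ≠ col r (QuotientGroup.mk γ)
      have hne : (QuotientGroup.mk (u * γ) : Γ ⧸ H₀) ≠ QuotientGroup.mk γ := by
        intro heq
        apply hnot
        have := QuotientGroup.eq.mp heq.symm
        have hrw : γ⁻¹ * (u * γ) = γ⁻¹ * u * γ := by group
        rwa [hrw] at this
      have hmemA : (QuotientGroup.mk (u * γ) : Γ ⧸ H₀) ∈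
          (((B r).image (fun v => v • (QuotientGroup.mk γ : Γ ⧸ H₀))).erase
            (QuotientGroup.mk γ)) := by
        refine Finset.mem_erase.mpr ⟨hne, Finset.mem_image.mpr ⟨u, hu, ?_⟩⟩
        rfl
      exact (hcol r (QuotientGroup.mk γ) _ hmemA).symm
  -- instances on P
  haveI : CompactSpace P :=
    inferInstanceAs (CompactSpace (Subgroup Γ × (Γ → ∀ r : ℕ, Fin (k r))))
  haveI hmetrP : TopologicalSpace.MetrizableSpace P :=
    inferInstanceAs (TopologicalSpace.MetrizableSpace (Subgroup Γ × (Γ → ∀ r : ℕ, Fin (k r))))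
  -- minimal subsystem
  obtain ⟨M, hMX, hMne, hMcl, hMinv, hMorb⟩ :=
    Elek.exists_minimal_invt (Elek.σ : Γ → P → P) Elek.σ_continuous Elek.σ_one
      (fun g h p => (Elek.σ_mul g h p).symm) X hXclosed ⟨(H₀, c), hp₀⟩ hXinv
  -- the key stabilizer computation on X
  have key : ∀ q : P, q ∈ X → ∀ g : Γ, (Elek.σ g q = q ↔ g ∈ q.1) := by
    intro q hq g
    constructor
    · intro hfix
      by_contra hg
      obtain ⟨r, hr⟩ := hcover g
      have hinv : ∀ γ : Γ, q.2 (γ * g) = q.2 γ := fun γ =>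
        congrFun (congrArg Prod.snd hfix) γ
      have hb := hq.2.2 r 1 g hr (by simpa using hg)
      apply hb
      calc q.2 (g * 1) r = q.2 (1 * g) r := by rw [mul_one, one_mul]
        _ = q.2 1 r := congrFun (hinv 1) r
    · intro hg
      exact Prod.ext (Elek.conjSub_of_mem hg) (funext fun γ => hq.2.1 γ g hg)
  -- assemble the system
  haveI : CompactSpace ↥M := isCompact_iff_compactSpace.mp hMcl.isCompact
  haveI : Nonempty ↥M := hMne.to_subtype
  letI actM : MulAction Γ ↥M :=
    { smul := fun g q => ⟨Elek.σ g q.1, hMinv g q.1 q.2⟩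
      one_smul := fun q => Subtype.ext (Elek.σ_one q.1)
      mul_smul := fun g₁ g₂ q => Subtype.ext (Elek.σ_mul g₁ g₂ q.1) }
  haveI : ContinuousConstSMul Γ ↥M :=
    ⟨fun g => Continuous.subtype_mk ((Elek.σ_continuous g).comp continuous_subtype_val) _⟩
  refine ⟨⟨↥M⟩, ?_, ?_⟩
  · -- minimality
    intro x
    intro y
    rw [closure_subtype]
    have himg : (Subtype.val '' {y' : ↥M | ∃ g : Γ, g • x = y'}) =
        {q : P | ∃ g : Γ, Elek.σ g ↑x = q} := by
      ext q
      constructor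
      · rintro ⟨y', ⟨g, rfl⟩, rfl⟩
        exact ⟨g, rfl⟩
      · rintro ⟨g, rfl⟩
        exact ⟨⟨Elek.σ g ↑x, hMinv g ↑x x.2⟩, ⟨g, rfl⟩, rfl⟩
    rw [himg, hMorb ↑x x.2]
    exact y.2
  · -- Z-properness
    intro x
    have hxX : (x : P) ∈ X := hMX x.2
    have hstabset : ∀ g : Γ, g ∈ MulAction.stabilizer Γ x ↔ g ∈ (x : P).1 := by
      intro g
      rw [MulAction.mem_stabilizer_iff]
      constructor
      · intro h
        exact (key ↑x hxX g).mp (congrArg Subtype.val h)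
      · intro h
        exact Subtype.ext ((key ↑x hxX g).mpr h)
    constructor
    · ext g
      simp only [SetLike.mem_coe]
      constructor
      · intro hgs
        have hg1 : g ∈ (x : P).1 := (hstabset g).mp hgs
        refine ⟨{y : ↥M | g ∈ (y : P).1}, ?_, hg1, ?_⟩
        · have hop : {y : ↥M | g ∈ (y : P).1} =
              (fun y : ↥M => (y : P).1) ⁻¹' {H : Subgroup Γ | g ∈ H} := rfl
          rw [hop]
          exact (Elek.isClopen_mem g).2.preimage
            (continuous_fst.comp continuous_subtype_val)
        · intro y hy
          exact Subtype.ext ((key ↑y (hMX y.2) g).mpr hy)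
      · rintro ⟨U, hUopen, hxU, hUfix⟩
        exact MulAction.mem_stabilizer_iff.mpr (hUfix x hxU)
    · have hseq : MulAction.stabilizer Γ x = (x : P).1 := by
        ext g
        exact hstabset g
      rw [hseq]
      exact hxX.1
end

section
/- Let Γ be a finitely generated group and Z ⊆ Sub(Γ) a sofic uniformly recurrent subgroup. Then there exists a Γ-invariant Borel probability measure on Z (with respect to the conjugation action), i.e., Z carries an invariant random subgroup. -/
open MeasureTheory

/-- The Borel σ-algebra on `Sub(Γ)`. -/
noncomputable instance {Γ : Type*} [Group Γ] : MeasurableSpace (Subgroup Γ) :=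
  borel (Subgroup Γ)

/-- The word length of an element of a free group (length of its reduced word). -/
def wordLength {n : ℕ} (w : FreeGroup (Fin n)) : ℕ := (FreeGroup.toWord w).length

/-- `p` is a `(Z,r)`-vertex: there is `H ∈ Z` such that words of length at most `r`
move `p` exactly as they move the base coset of `Γ/H`. -/
def IsZRVertex {Γ : Type} [Group Γ] {n : ℕ} (γ : Fin n → Γ) (Z : Set (Subgroup Γ))
    {V : Type} (ρ : FreeGroup (Fin n) →* Equiv.Perm V) (r : ℕ) (p : V) : Prop :=
  ∃ H ∈ Z, ∀ w w' : FreeGroup (Fin n), wordLength w ≤ r → wordLength w' ≤ r →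
    (ρ w p = ρ w' p ↔
      (QuotientGroup.mk (FreeGroup.lift γ w) : Γ ⧸ H) = QuotientGroup.mk (FreeGroup.lift γ w'))

/-- A URS `Z` is sofic (w.r.t. the generating tuple `γ`): for every `r ≥ 1` and `ε > 0`
there is a finite nonempty free-group set in which at least a `(1-ε)` proportion of the
points are `(Z,r)`-vertices. -/
def IsSoficURS {Γ : Type} [Group Γ] {n : ℕ} (γ : Fin n → Γ) (Z : Set (Subgroup Γ)) : Prop :=
  ∀ r : ℕ, 1 ≤ r → ∀ ε : ℝ, 0 < ε →
    ∃ (V : Type) (_ : Fintype V) (_ : Nonempty V)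
      (ρ : FreeGroup (Fin n) →* Equiv.Perm V),
      (1 - ε) * (Fintype.card V : ℝ) ≤
        ({p : V | IsZRVertex γ Z ρ r p}.ncard : ℝ)

set_option linter.unusedSectionVars false

open Topology

section Topology
variable {Γ : Type*} [Group Γ]

noncomputable def chEmb : Subgroup Γ → (Γ → Bool) :=
  fun H (g : Γ) => @decide (g ∈ H) (Classical.dec _)

lemma chEmb_eq_iff {H H' : Subgroup Γ} {a : Γ} :
    chEmb H a = chEmb H' a ↔ (a ∈ H ↔ a ∈ H') := by
  simp [chEmb, decide_eq_decide]

lemma isInducing_chEmb : IsInducing (chEmb (Γ := Γ)) := ⟨rfl⟩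

lemma injective_chEmb : Function.Injective (chEmb (Γ := Γ)) := by
  intro H H' h
  ext a
  exact chEmb_eq_iff.mp (congrFun h a)

lemma continuous_coord (a : Γ) : Continuous fun H : Subgroup Γ => chEmb H a :=
  (continuous_apply a).comp isInducing_chEmb.continuous

lemma isClopen_cyl (a : Γ) (b : Bool) : IsClopen {H : Subgroup Γ | chEmb H a = b} :=
  (isClopen_discrete {b}).preimage (continuous_coord a)

lemma isClopen_cylB (a : Γ) (b : Bool) : IsClopen {f : Γ → Bool | f a = b} :=
  (isClopen_discrete {b}).preimage (continuous_apply a)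

lemma range_chEmb_closed : IsClosed (Set.range (chEmb (Γ := Γ))) := by
  have : Set.range (chEmb (Γ := Γ)) =
      {f : Γ → Bool | f 1 = true} ∩
      ((⋂ (a : Γ) (b : Γ), {f : Γ → Bool | f a = true}ᶜ ∪ ({f | f b = true}ᶜ ∪ {f | f (a*b) = true})) ∩
       (⋂ (a : Γ), {f : Γ → Bool | f a = true}ᶜ ∪ {f | f a⁻¹ = true})) := by
    ext f
    simp only [Set.mem_range, Set.mem_inter_iff, Set.mem_setOf_eq, Set.mem_iInter,
      Set.mem_union, Set.mem_compl_iff]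
    constructor
    · rintro ⟨H, rfl⟩
      refine ⟨by simp only [chEmb, decide_eq_true_eq]; exact H.one_mem, fun a b => ?_, fun a => ?_⟩
      · simp only [chEmb, decide_eq_true_eq]
        by_cases ha : a ∈ H
        · by_cases hb : b ∈ H
          · exact Or.inr (Or.inr (H.mul_mem ha hb))
          · tauto
        · tauto
      · simp only [chEmb, decide_eq_true_eq]
        by_cases ha : a ∈ H
        · exact Or.inr (H.inv_mem ha)
        · tauto
    · rintro ⟨h1, hm, hi⟩
      refine ⟨{ carrier := {a | f a = true}
                one_mem' := h1
                mul_mem' := fun {a b} ha hb => by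
                  have := hm a b; simp only [Set.mem_setOf_eq] at *; tauto
                inv_mem' := fun {a} ha => by
                  have := hi a; simp only [Set.mem_setOf_eq] at *; tauto }, ?_⟩
      funext a
      simp [chEmb]
  rw [this]
  refine ((isClopen_cylB 1 true).isClosed).inter (IsClosed.inter ?_ ?_)
  · refine isClosed_iInter fun a => isClosed_iInter fun b => ?_
    exact (((isClopen_cylB a true).compl).union
      (((isClopen_cylB b true).compl).union (isClopen_cylB (a*b) true))).isClosed
  · refine isClosed_iInter fun a => ?_
    exact (((isClopen_cylB a true).compl).union (isClopen_cylB a⁻¹ true)).isClosed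

instance : CompactSpace (Subgroup Γ) := by
  constructor
  rw [isInducing_chEmb.isCompact_iff, Set.image_univ]
  exact range_chEmb_closed.isCompact

instance : T2Space (Subgroup Γ) :=
  (IsEmbedding.mk isInducing_chEmb injective_chEmb).t2Space

instance : BorelSpace (Subgroup Γ) := ⟨rfl⟩
end Topology
section Topology2
variable {Γ : Type*} [Group Γ]

lemma exists_finset_nbhd {U : Set (Subgroup Γ)} (hU : IsOpen U) {H : Subgroup Γ} (hH : H ∈ U) :
    ∃ A : Finset Γ, {H' : Subgroup Γ | ∀ a ∈ A, chEmb H' a = chEmb H a} ⊆ U := by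
  obtain ⟨O, hO, rfl⟩ := isInducing_chEmb.isOpen_iff.mp hU
  rw [isOpen_pi_iff] at hO
  obtain ⟨I, u, h1, h2⟩ := hO (chEmb H) hH
  refine ⟨I, fun H' hH' => ?_⟩
  refine h2 ?_
  intro a ha
  rw [Set.mem_setOf_eq] at hH'
  rw [hH' a ha]
  exact (h1 a ha).2

lemma isClopen_nbhd (H : Subgroup Γ) (A : Finset Γ) :
    IsClopen {H' : Subgroup Γ | ∀ a ∈ A, chEmb H' a = chEmb H a} := by
  have : {H' : Subgroup Γ | ∀ a ∈ A, chEmb H' a = chEmb H a} =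
      ⋂ a ∈ A, {H' : Subgroup Γ | chEmb H' a = chEmb H a} := by
    ext H'; simp
  rw [this]
  exact Set.Finite.isClopen_biInter A.finite_toSet fun a _ => isClopen_cyl a _

open Classical in
/-- Choice of a clopen basic neighborhood inside an open set. -/
noncomputable def nbhdA (U : Set (Subgroup Γ)) (hU : IsOpen U) (x : Subgroup Γ) : Finset Γ :=
  if h : x ∈ U then (exists_finset_nbhd hU h).choose else ∅

lemma nbhdA_spec {U : Set (Subgroup Γ)} (hU : IsOpen U) {x : Subgroup Γ} (hx : x ∈ U) :
    {H' : Subgroup Γ | ∀ a ∈ nbhdA U hU x, chEmb H' a = chEmb x a} ⊆ U := by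
  classical
  rw [nbhdA, dif_pos hx]
  exact (exists_finset_nbhd hU hx).choose_spec

lemma exists_clopen_between {K U : Set (Subgroup Γ)} (hK : IsCompact K) (hU : IsOpen U)
    (hKU : K ⊆ U) : ∃ C : Set (Subgroup Γ), IsClopen C ∧ K ⊆ C ∧ C ⊆ U := by
  have hcov : ∀ x ∈ K, {H' : Subgroup Γ | ∀ a ∈ nbhdA U hU x, chEmb H' a = chEmb x a} ∈ nhds x :=
    fun x _ => (isClopen_nbhd x _).isOpen.mem_nhds (fun a _ => rfl)
  obtain ⟨t, htK, hcover⟩ := hK.elim_nhds_subcover _ hcov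
  refine ⟨⋃ x ∈ t, {H' : Subgroup Γ | ∀ a ∈ nbhdA U hU x, chEmb H' a = chEmb x a},
    Set.Finite.isClopen_biUnion t.finite_toSet (fun x _ => isClopen_nbhd x _), hcover, ?_⟩
  exact Set.iUnion₂_subset fun x hx => nbhdA_spec hU (hKU (htK x hx))

lemma clopen_support {C : Set (Subgroup Γ)} (hC : IsClopen C) :
    ∃ A : Finset Γ, ∀ H H' : Subgroup Γ, (∀ a ∈ A, (a ∈ H ↔ a ∈ H')) → H ∈ C → H' ∈ C := by
  have hKC : IsCompact C := hC.isClosed.isCompact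
  have hcov : ∀ x ∈ C,
      {H' : Subgroup Γ | ∀ a ∈ nbhdA C hC.isOpen x, chEmb H' a = chEmb x a} ∈ nhds x :=
    fun x _ => (isClopen_nbhd x _).isOpen.mem_nhds (fun a _ => rfl)
  classical
  obtain ⟨t, htK, hcover⟩ := hKC.elim_nhds_subcover _ hcov
  refine ⟨t.biUnion (fun x => nbhdA C hC.isOpen x), fun H H' hagree hH => ?_⟩
  obtain ⟨x, hxt, hx⟩ := Set.mem_iUnion₂.mp (hcover hH)
  refine nbhdA_spec hC.isOpen (htK x hxt) ?_
  intro a ha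
  have ha' : a ∈ t.biUnion (fun x => nbhdA C hC.isOpen x) :=
    Finset.mem_biUnion.mpr ⟨x, hxt, ha⟩
  rw [← hx a ha]
  exact chEmb_eq_iff.mpr (hagree a ha').symm

lemma mem_conjSub {g a : Γ} {H : Subgroup Γ} : a ∈ conjSub g H ↔ g⁻¹ * a * g ∈ H := by
  simp only [conjSub, Subgroup.mem_map, MulEquiv.coe_toMonoidHom, MulAut.conj_apply]
  constructor
  · rintro ⟨h, hh, rfl⟩
    simpa [mul_assoc] using hh
  · intro h
    exact ⟨g⁻¹ * a * g, h, by group⟩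

lemma conjSub_conjSub (g h : Γ) (H : Subgroup Γ) :
    conjSub g (conjSub h H) = conjSub (g * h) H := by
  ext a
  simp [mem_conjSub, mul_assoc]

lemma conjSub_one (H : Subgroup Γ) : conjSub (1 : Γ) H = H := by
  ext a; simp [mem_conjSub]

lemma continuous_conjSub (g : Γ) : Continuous (conjSub g : Subgroup Γ → Subgroup Γ) := by
  rw [isInducing_chEmb.continuous_iff]
  have : (chEmb ∘ (conjSub g : Subgroup Γ → Subgroup Γ)) =
      fun H a => chEmb H (g⁻¹ * a * g) := by
    funext H a
    exact decide_eq_decide.mpr mem_conjSub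
  rw [this]
  exact continuous_pi fun a => continuous_coord _

/-- Conjugation as a homeomorphism of the Chabauty space. -/
noncomputable def conjHomeo (g : Γ) : Homeomorph (Subgroup Γ) (Subgroup Γ) where
  toFun := conjSub g
  invFun := conjSub g⁻¹
  left_inv := fun H => by rw [conjSub_conjSub]; simp [conjSub_one]
  right_inv := fun H => by rw [conjSub_conjSub]; simp [conjSub_one]
  continuous_toFun := continuous_conjSub g
  continuous_invFun := continuous_conjSub g⁻¹

end Topology2
section LimU
open Filter

/-- A fixed ultrafilter on `ℕ` extending the cofinite/atTop filter. -/
noncomputable def ultraU : Ultrafilter ℕ := Ultrafilter.of Filter.atTop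

lemma ultraU_le_atTop : (ultraU : Filter ℕ) ≤ Filter.atTop := Ultrafilter.of_le _

lemma exists_tendsto_ultraU {u : ℕ → ℝ} (h0 : ∀ k, 0 ≤ u k) (h1 : ∀ k, u k ≤ 1) :
    ∃ a, Filter.Tendsto u (ultraU : Filter ℕ) (nhds a) := by
  have hmem : Set.Icc (0:ℝ) 1 ∈ Ultrafilter.map u ultraU :=
    Filter.mem_map.mpr (Filter.univ_mem' (fun k => ⟨h0 k, h1 k⟩))
  obtain ⟨a, -, ha⟩ := isCompact_Icc.ultrafilter_le_nhds (Ultrafilter.map u ultraU)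
    (Filter.le_principal_iff.mpr hmem)
  exact ⟨a, ha⟩

open Classical in
/-- Limit of a `[0,1]`-valued sequence along the fixed ultrafilter. -/
noncomputable def limUlt (u : ℕ → ℝ) : ℝ :=
  if h : ∃ a, Filter.Tendsto u (ultraU : Filter ℕ) (nhds a) then h.choose else 0

lemma tendsto_limUlt {u : ℕ → ℝ} (h0 : ∀ k, 0 ≤ u k) (h1 : ∀ k, u k ≤ 1) :
    Filter.Tendsto u (ultraU : Filter ℕ) (nhds (limUlt u)) := by
  classical
  rw [limUlt, dif_pos (exists_tendsto_ultraU h0 h1)]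
  exact (exists_tendsto_ultraU h0 h1).choose_spec

lemma limUlt_eq {u : ℕ → ℝ} {a : ℝ} (h0 : ∀ k, 0 ≤ u k) (h1 : ∀ k, u k ≤ 1)
    (ha : Filter.Tendsto u (ultraU : Filter ℕ) (nhds a)) : limUlt u = a :=
  tendsto_nhds_unique (tendsto_limUlt h0 h1) ha

lemma limUlt_nonneg {u : ℕ → ℝ} (h0 : ∀ k, 0 ≤ u k) (h1 : ∀ k, u k ≤ 1) :
    0 ≤ limUlt u :=
  ge_of_tendsto (tendsto_limUlt h0 h1) (Filter.Eventually.of_forall h0)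

lemma limUlt_le_one {u : ℕ → ℝ} (h0 : ∀ k, 0 ≤ u k) (h1 : ∀ k, u k ≤ 1) :
    limUlt u ≤ 1 :=
  le_of_tendsto (tendsto_limUlt h0 h1) (Filter.Eventually.of_forall h1)

lemma limUlt_mono {u v : ℕ → ℝ} (hu0 : ∀ k, 0 ≤ u k) (hu1 : ∀ k, u k ≤ 1)
    (hv0 : ∀ k, 0 ≤ v k) (hv1 : ∀ k, v k ≤ 1) (h : ∀ k, u k ≤ v k) :
    limUlt u ≤ limUlt v :=
  le_of_tendsto_of_tendsto' (tendsto_limUlt hu0 hu1) (tendsto_limUlt hv0 hv1) h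

lemma limUlt_const (c : ℝ) (h0 : 0 ≤ c) (h1 : c ≤ 1) : limUlt (fun _ => c) = c :=
  limUlt_eq (fun _ => h0) (fun _ => h1) tendsto_const_nhds

lemma limUlt_add {u v w : ℕ → ℝ} (hu0 : ∀ k, 0 ≤ u k) (hu1 : ∀ k, u k ≤ 1)
    (hv0 : ∀ k, 0 ≤ v k) (hv1 : ∀ k, v k ≤ 1)
    (hw0 : ∀ k, 0 ≤ w k) (hw1 : ∀ k, w k ≤ 1)
    (h : ∀ k, w k = u k + v k) : limUlt w = limUlt u + limUlt v := by
  refine limUlt_eq hw0 hw1 ?_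
  have := (tendsto_limUlt hu0 hu1).add (tendsto_limUlt hv0 hv1)
  refine this.congr (fun k => (h k).symm)

lemma limUlt_eq_of_tendsto_sub {u v : ℕ → ℝ} (hu0 : ∀ k, 0 ≤ u k) (hu1 : ∀ k, u k ≤ 1)
    (hv0 : ∀ k, 0 ≤ v k) (hv1 : ∀ k, v k ≤ 1)
    (h : Filter.Tendsto (fun k => u k - v k) Filter.atTop (nhds 0)) :
    limUlt u = limUlt v := by
  have h' : Filter.Tendsto (fun k => u k - v k) (ultraU : Filter ℕ) (nhds 0) :=
    h.mono_left ultraU_le_atTop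
  have h2 : Filter.Tendsto (fun k => u k - v k) (ultraU : Filter ℕ)
      (nhds (limUlt u - limUlt v)) :=
    (tendsto_limUlt hu0 hu1).sub (tendsto_limUlt hv0 hv1)
  have := tendsto_nhds_unique h2 h'
  linarith

end LimU

section Words
variable {Γ : Type} [Group Γ] {n : ℕ}

lemma wordLength_one : wordLength (1 : FreeGroup (Fin n)) = 0 := by
  simp [wordLength, FreeGroup.toWord_one]

lemma wordLength_mul (w w' : FreeGroup (Fin n)) :
    wordLength (w * w') ≤ wordLength w + wordLength w' := by
  have h := (FreeGroup.toWord_mul_sublist w w').length_le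
  simpa [wordLength] using h

lemma lift_surj (γ : Fin n → Γ) (hgen : Subgroup.closure (Set.range γ) = ⊤) (x : Γ) :
    ∃ w : FreeGroup (Fin n), FreeGroup.lift γ w = x := by
  have : x ∈ (FreeGroup.lift γ).range := by
    rw [FreeGroup.range_lift_eq_closure, hgen]
    trivial
  exact this

end Words
section Combinatorics
open scoped Classical

lemma vertex_transport {Γ : Type} [Group Γ] {n : ℕ} (γ : Fin n → Γ) (Z : Set (Subgroup Γ))
    {V : Type} (ρ : FreeGroup (Fin n) →* Equiv.Perm V) (r : ℕ)
    (Φ : V → Subgroup Γ)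
    (hwit : ∀ p : V, IsZRVertex γ Z ρ r p → ∀ w w' : FreeGroup (Fin n),
      wordLength w ≤ r → wordLength w' ≤ r →
      (ρ w p = ρ w' p ↔
        (QuotientGroup.mk (FreeGroup.lift γ w) : Γ ⧸ (Φ p)) =
          QuotientGroup.mk (FreeGroup.lift γ w')))
    (g : Γ) (u : FreeGroup (Fin n)) (hu : FreeGroup.lift γ u = g)
    (a : Γ) (wa : FreeGroup (Fin n)) (hwa : FreeGroup.lift γ wa = a)
    (hlen : wordLength wa + wordLength u ≤ r)
    (p : V) (hp : IsZRVertex γ Z ρ r p) (hq : IsZRVertex γ Z ρ r (ρ u p)) :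
    (a ∈ conjSub g (Φ p) ↔ a ∈ Φ (ρ u p)) := by
  have lwa : wordLength wa ≤ r := le_trans (Nat.le_add_right _ _) hlen
  have lu : wordLength u ≤ r := le_trans (Nat.le_add_left _ _) hlen
  have h1 : a ∈ Φ (ρ u p) ↔ ρ wa (ρ u p) = ρ u p := by
    have h := hwit (ρ u p) hq wa 1 lwa (by simp [wordLength_one])
    rw [map_one, map_one] at h
    simp only [Equiv.Perm.coe_one, id_eq] at h
    rw [h, hwa, QuotientGroup.eq]
    rw [mul_one, inv_mem_iff]
  have h2 : ρ wa (ρ u p) = ρ u p ↔ a ∈ conjSub g (Φ p) := by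
    have h3 := hwit p hp (wa * u) u (le_trans (wordLength_mul _ _) hlen) lu
    rw [map_mul, Equiv.Perm.mul_apply] at h3
    rw [h3, map_mul, hwa, hu, QuotientGroup.eq, mem_conjSub]
    constructor
    · intro h
      have he : g⁻¹ * a * g = ((a * g)⁻¹ * g)⁻¹ := by group
      rw [he]
      exact inv_mem h
    · intro h
      have he : (a * g)⁻¹ * g = (g⁻¹ * a * g)⁻¹ := by group
      rw [he]
      exact inv_mem h
  rw [h1]
  exact h2.symm

lemma count_est {V : Type} [Fintype V] (σ : Equiv.Perm V) (P Q Gd : V → Prop)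
    (h : ∀ p, Gd p → Gd (σ p) → (P p ↔ Q (σ p))) :
    |((Finset.univ.filter fun p => P p).card : ℝ) -
      ((Finset.univ.filter fun p => Q p).card : ℝ)| ≤
      2 * ((Finset.univ.filter fun p => ¬ Gd p).card : ℝ) := by
  set s := Finset.univ.filter fun p => P p with hs
  set t' := Finset.univ.filter fun p => Q (σ p) with ht'
  set t := Finset.univ.filter fun p => Q p with ht
  set b1 := Finset.univ.filter fun p => ¬ Gd p with hb1
  set b2 := Finset.univ.filter fun p => ¬ Gd (σ p) with hb2
  have htt : t'.card = t.card := Finset.card_equiv σ (by intro i; simp [ht', ht])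
  have hbb : b2.card = b1.card := Finset.card_equiv σ (by intro i; simp [hb1, hb2])
  have hsub1 : s ⊆ t' ∪ (b1 ∪ b2) := by
    intro p hp
    simp only [hs, ht', hb1, hb2, Finset.mem_filter, Finset.mem_union, Finset.mem_univ,
      true_and] at *
    by_cases h1 : Gd p
    · by_cases h2 : Gd (σ p)
      · exact Or.inl ((h p h1 h2).mp hp)
      · exact Or.inr (Or.inr h2)
    · exact Or.inr (Or.inl h1)
  have hsub2 : t' ⊆ s ∪ (b1 ∪ b2) := by
    intro p hp
    simp only [hs, ht', hb1, hb2, Finset.mem_filter, Finset.mem_union, Finset.mem_univ,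
      true_and] at *
    by_cases h1 : Gd p
    · by_cases h2 : Gd (σ p)
      · exact Or.inl ((h p h1 h2).mpr hp)
      · exact Or.inr (Or.inr h2)
    · exact Or.inr (Or.inl h1)
  have c1 : s.card ≤ t'.card + (b1.card + b2.card) :=
    le_trans (Finset.card_le_card hsub1)
      (le_trans (Finset.card_union_le _ _)
        (by exact Nat.add_le_add_left (Finset.card_union_le _ _) _))
  have c2 : t'.card ≤ s.card + (b1.card + b2.card) :=
    le_trans (Finset.card_le_card hsub2)
      (le_trans (Finset.card_union_le _ _)
        (by exact Nat.add_le_add_left (Finset.card_union_le _ _) _))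
  rw [← htt]
  rw [abs_sub_le_iff]
  rw [hbb] at c1 c2
  constructor
  · have h' : (s.card : ℝ) ≤ (t'.card : ℝ) + ((b1.card : ℝ) + (b1.card : ℝ)) := by
      exact_mod_cast c1
    linarith
  · have h' : (t'.card : ℝ) ≤ (s.card : ℝ) + ((b1.card : ℝ) + (b1.card : ℝ)) := by
      exact_mod_cast c2
    linarith

lemma per_k_bound {Γ : Type} [Group Γ] {n : ℕ} (γ : Fin n → Γ) (Z : Set (Subgroup Γ))
    {V : Type} [Fintype V] (ρ : FreeGroup (Fin n) →* Equiv.Perm V) (r : ℕ)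
    (ε : ℝ)
    (hgood : (1 - ε) * (Fintype.card V : ℝ) ≤ (({p : V | IsZRVertex γ Z ρ r p}).ncard : ℝ))
    (Φ : V → Subgroup Γ)
    (hwit : ∀ p : V, IsZRVertex γ Z ρ r p → ∀ w w' : FreeGroup (Fin n),
      wordLength w ≤ r → wordLength w' ≤ r →
      (ρ w p = ρ w' p ↔
        (QuotientGroup.mk (FreeGroup.lift γ w) : Γ ⧸ (Φ p)) =
          QuotientGroup.mk (FreeGroup.lift γ w')))
    (g : Γ) (u : FreeGroup (Fin n)) (hu : FreeGroup.lift γ u = g)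
    (C : Set (Subgroup Γ)) (A : Finset Γ)
    (hsupp : ∀ H H' : Subgroup Γ, (∀ a ∈ A, (a ∈ H ↔ a ∈ H')) → H ∈ C → H' ∈ C)
    (wd : Γ → FreeGroup (Fin n)) (hwd : ∀ x, FreeGroup.lift γ (wd x) = x)
    (hr : ∀ a ∈ A, wordLength (wd a) + wordLength u ≤ r) :
    |((Finset.univ.filter fun p => Φ p ∈ conjSub g ⁻¹' C).card : ℝ) -
      ((Finset.univ.filter fun p => Φ p ∈ C).card : ℝ)| ≤ 2 * (ε * Fintype.card V) := by
  have hmain : ∀ p : V, IsZRVertex γ Z ρ r p → IsZRVertex γ Z ρ r (ρ u p) →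
      ((Φ p ∈ conjSub g ⁻¹' C) ↔ Φ (ρ u p) ∈ C) := by
    intro p hp hq
    have hag : ∀ a ∈ A, (a ∈ conjSub g (Φ p) ↔ a ∈ Φ (ρ u p)) := fun a ha =>
      vertex_transport γ Z ρ r Φ hwit g u hu a (wd a) (hwd a) (hr a ha) p hp hq
    simp only [Set.mem_preimage]
    exact ⟨fun h => hsupp _ _ hag h, fun h => hsupp _ _ (fun a ha => (hag a ha).symm) h⟩
  have hce := count_est (ρ u) (fun p => Φ p ∈ conjSub g ⁻¹' C) (fun p => Φ p ∈ C)
    (fun p => IsZRVertex γ Z ρ r p) hmain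
  refine le_trans hce ?_
  have hsplit : (Finset.univ.filter fun p : V => IsZRVertex γ Z ρ r p).card
      + (Finset.univ.filter fun p : V => ¬ IsZRVertex γ Z ρ r p).card = Fintype.card V := by
    rw [Finset.card_filter_add_card_filter_not, Finset.card_univ]
  have hn : (({p : V | IsZRVertex γ Z ρ r p}).ncard : ℝ)
      = ((Finset.univ.filter fun p : V => IsZRVertex γ Z ρ r p).card : ℝ) := by
    norm_cast
    rw [Set.ncard_eq_toFinset_card', Set.toFinset_setOf]
  rw [hn] at hgood
  have : ((Finset.univ.filter fun p : V => ¬ IsZRVertex γ Z ρ r p).card : ℝ)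
      ≤ ε * Fintype.card V := by
    have hsplit' : ((Finset.univ.filter fun p : V => IsZRVertex γ Z ρ r p).card : ℝ)
        + ((Finset.univ.filter fun p : V => ¬ IsZRVertex γ Z ρ r p).card : ℝ)
        = (Fintype.card V : ℝ) := by exact_mod_cast hsplit
    linarith
  linarith

end Combinatorics
section FracD
open scoped Classical

/-- Empirical measure of `A` under a labeling map `Φ`. -/
noncomputable def fracD {Γ : Type} [Group Γ] {V : Type} [Fintype V]
    (Φ : V → Subgroup Γ) (A : Set (Subgroup Γ)) : ℝ :=
  (({p : V | Φ p ∈ A}).ncard : ℝ) / (Fintype.card V : ℝ)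

variable {Γ : Type} [Group Γ] {V : Type} [Fintype V] [Nonempty V] (Φ : V → Subgroup Γ)

lemma card_posR : 0 < ((Fintype.card V : ℝ)) := by exact_mod_cast Fintype.card_pos

lemma fracD_nonneg (A : Set (Subgroup Γ)) : 0 ≤ fracD Φ A :=
  div_nonneg (Nat.cast_nonneg _) (le_of_lt card_posR)

lemma ncard_le_cardV (s : Set V) : s.ncard ≤ Fintype.card V := by
  have h := Set.ncard_le_ncard (Set.subset_univ s) Set.finite_univ
  rwa [Set.ncard_univ, Nat.card_eq_fintype_card] at h

lemma fracD_le_one (A : Set (Subgroup Γ)) : fracD Φ A ≤ 1 := by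
  rw [fracD, div_le_one card_posR]
  exact_mod_cast ncard_le_cardV _

lemma fracD_univ : fracD Φ Set.univ = 1 := by
  rw [fracD]
  have : {p : V | Φ p ∈ (Set.univ : Set (Subgroup Γ))} = Set.univ := by
    ext p; simp
  rw [this, Set.ncard_univ, Nat.card_eq_fintype_card]
  exact div_self (ne_of_gt card_posR)

lemma fracD_zero {Z : Set (Subgroup Γ)} (hΦZ : ∀ p, Φ p ∈ Z) {A : Set (Subgroup Γ)}
    (hA : A ∩ Z = ∅) : fracD Φ A = 0 := by
  rw [fracD]
  have : {p : V | Φ p ∈ A} = ∅ := by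
    ext p
    simp only [Set.mem_setOf_eq, Set.mem_empty_iff_false, iff_false]
    intro hmem
    exact Set.eq_empty_iff_forall_notMem.mp hA (Φ p) ⟨hmem, hΦZ p⟩
  rw [this]
  simp

lemma fracD_add {A B : Set (Subgroup Γ)} (hAB : Disjoint A B) :
    fracD Φ (A ∪ B) = fracD Φ A + fracD Φ B := by
  have e1 : {p : V | Φ p ∈ A ∪ B} = {p : V | Φ p ∈ A} ∪ {p : V | Φ p ∈ B} := by
    ext p; simp [Set.mem_union]
  have hd : Disjoint {p : V | Φ p ∈ A} {p : V | Φ p ∈ B} := by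
    rw [Set.disjoint_left]
    intro p hp1 hp2
    exact Set.disjoint_left.mp hAB hp1 hp2
  rw [fracD, fracD, fracD, e1, Set.ncard_union_eq hd (Set.toFinite _) (Set.toFinite _)]
  push_cast
  ring

lemma fracD_mono {A B : Set (Subgroup Γ)} (hAB : A ⊆ B) : fracD Φ A ≤ fracD Φ B := by
  rw [fracD, fracD]
  have h1 : ({p : V | Φ p ∈ A}).ncard ≤ ({p : V | Φ p ∈ B}).ncard :=
    Set.ncard_le_ncard (fun p hp => hAB hp) (Set.toFinite _)
  have h2 : (({p : V | Φ p ∈ A}).ncard : ℝ) ≤ (({p : V | Φ p ∈ B}).ncard : ℝ) := by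
    exact_mod_cast h1
  exact div_le_div_of_nonneg_right h2 (le_of_lt card_posR)

lemma ncard_setOf_eq_card_filter (P : V → Prop) :
    ({p : V | P p}).ncard = (Finset.univ.filter P).card := by
  rw [Set.ncard_eq_toFinset_card', Set.toFinset_setOf]

lemma per_k_bound' {n : ℕ} (γ : Fin n → Γ) (Z : Set (Subgroup Γ))
    (ρ : FreeGroup (Fin n) →* Equiv.Perm V) (r : ℕ) (ε : ℝ)
    (hgood : (1 - ε) * (Fintype.card V : ℝ) ≤ (({p : V | IsZRVertex γ Z ρ r p}).ncard : ℝ))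
    (hwit : ∀ p : V, IsZRVertex γ Z ρ r p → ∀ w w' : FreeGroup (Fin n),
      wordLength w ≤ r → wordLength w' ≤ r →
      (ρ w p = ρ w' p ↔
        (QuotientGroup.mk (FreeGroup.lift γ w) : Γ ⧸ (Φ p)) =
          QuotientGroup.mk (FreeGroup.lift γ w')))
    (g : Γ) (u : FreeGroup (Fin n)) (hu : FreeGroup.lift γ u = g)
    (C : Set (Subgroup Γ)) (A : Finset Γ)
    (hsupp : ∀ H H' : Subgroup Γ, (∀ a ∈ A, (a ∈ H ↔ a ∈ H')) → H ∈ C → H' ∈ C)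
    (wd : Γ → FreeGroup (Fin n)) (hwd : ∀ x, FreeGroup.lift γ (wd x) = x)
    (hr : ∀ a ∈ A, wordLength (wd a) + wordLength u ≤ r) :
    |fracD Φ (conjSub g ⁻¹' C) - fracD Φ C| ≤ 2 * ε := by
  have hbd := per_k_bound γ Z ρ r ε hgood Φ hwit g u hu C A hsupp wd hwd hr
  have hpos : (0:ℝ) < (Fintype.card V : ℝ) := card_posR
  rw [fracD, fracD, ncard_setOf_eq_card_filter, ncard_setOf_eq_card_filter,
    div_sub_div_same, abs_div, abs_of_pos hpos, div_le_iff₀ hpos]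
  calc |((Finset.univ.filter fun p : V => Φ p ∈ conjSub g ⁻¹' C).card : ℝ) -
        ((Finset.univ.filter fun p : V => Φ p ∈ C).card : ℝ)|
      ≤ 2 * (ε * (Fintype.card V : ℝ)) := hbd
    _ = 2 * ε * (Fintype.card V : ℝ) := by ring

end FracD
section ContentPart
open TopologicalSpace MeasureTheory

variable {Γ : Type} [Group Γ]

lemma measure_from_nu (Z : Set (Subgroup Γ)) (hZc : IsClosed Z)
    (ν : Set (Subgroup Γ) → ℝ)
    (hν0 : ∀ A, 0 ≤ ν A)
    (hν_univ : ν Set.univ = 1)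
    (hν_add : ∀ A B : Set (Subgroup Γ), Disjoint A B → ν (A ∪ B) = ν A + ν B)
    (hν_zero : ∀ A : Set (Subgroup Γ), A ∩ Z = ∅ → ν A = 0)
    (hν_inv : ∀ (g : Γ) (C : Set (Subgroup Γ)), IsClopen C → ν (conjSub g ⁻¹' C) = ν C) :
    ∃ μ : Measure (Subgroup Γ),
      IsProbabilityMeasure μ ∧ μ Z = 1 ∧
      ∀ g : Γ, MeasurePreserving (conjSub g) μ μ := by
  have hν_mono : ∀ A B : Set (Subgroup Γ), A ⊆ B → ν A ≤ ν B := by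
    intro A B hAB
    have h1 : B = A ∪ (B \ A) := (Set.union_diff_cancel hAB).symm
    have h2 : ν B = ν A + ν (B \ A) := by
      conv_lhs => rw [h1]
      rw [hν_add _ _ disjoint_sdiff_self_right]
    have := hν0 (B \ A)
    linarith
  have hsub : ∀ C₁ C₂ : Set (Subgroup Γ), ν (C₁ ∪ C₂) ≤ ν C₁ + ν C₂ := by
    intro C₁ C₂
    have hd : Disjoint C₁ (C₂ \ C₁) := disjoint_sdiff_self_right
    have h1 : C₁ ∪ C₂ = C₁ ∪ (C₂ \ C₁) := (Set.union_diff_self).symm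
    rw [h1, hν_add _ _ hd]
    have := hν_mono (C₂ \ C₁) C₂ Set.diff_subset
    linarith
  set lam : Compacts (Subgroup Γ) → NNReal := fun K =>
    sInf ((fun C => Real.toNNReal (ν C)) ''
      {C : Set (Subgroup Γ) | IsClopen C ∧ (K : Set (Subgroup Γ)) ⊆ C}) with hlam_def
  have hne : ∀ K : Compacts (Subgroup Γ),
      ((fun C => Real.toNNReal (ν C)) ''
        {C : Set (Subgroup Γ) | IsClopen C ∧ (K : Set (Subgroup Γ)) ⊆ C}).Nonempty :=
    fun K => ⟨_, ⟨Set.univ, ⟨isClopen_univ, Set.subset_univ _⟩, rfl⟩⟩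
  have hlam_le : ∀ (K : Compacts (Subgroup Γ)) (C : Set (Subgroup Γ)),
      IsClopen C → (K : Set (Subgroup Γ)) ⊆ C → lam K ≤ Real.toNNReal (ν C) :=
    fun K C hC hKC => csInf_le (OrderBot.bddBelow _) ⟨C, ⟨hC, hKC⟩, rfl⟩
  have hlam_ge : ∀ (K : Compacts (Subgroup Γ)) (x : NNReal),
      (∀ C : Set (Subgroup Γ), IsClopen C → (K : Set (Subgroup Γ)) ⊆ C →
        x ≤ Real.toNNReal (ν C)) → x ≤ lam K := by
    intro K x hx
    refine le_csInf (hne K) ?_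
    rintro y ⟨C, ⟨hC, hKC⟩, rfl⟩
    exact hx C hC hKC
  have hmono : ∀ K₁ K₂ : Compacts (Subgroup Γ), (K₁ : Set (Subgroup Γ)) ⊆ K₂ →
      lam K₁ ≤ lam K₂ := by
    intro K₁ K₂ h
    exact hlam_ge K₂ _ (fun C hC hKC => hlam_le K₁ C hC (h.trans hKC))
  have hsup_le : ∀ K₁ K₂ : Compacts (Subgroup Γ), lam (K₁ ⊔ K₂) ≤ lam K₁ + lam K₂ := by
    intro K₁ K₂
    rw [← tsub_le_iff_left]
    refine le_csInf (hne K₂) ?_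
    rintro x ⟨C₂, ⟨hC₂, hKC₂⟩, rfl⟩
    rw [tsub_le_iff_left, ← tsub_le_iff_right]
    refine le_csInf (hne K₁) ?_
    rintro x ⟨C₁, ⟨hC₁, hKC₁⟩, rfl⟩
    rw [tsub_le_iff_right]
    have hm : lam (K₁ ⊔ K₂) ≤ Real.toNNReal (ν (C₁ ∪ C₂)) := by
      refine hlam_le _ _ (hC₁.union hC₂) ?_
      rw [Compacts.coe_sup]
      exact Set.union_subset_union hKC₁ hKC₂
    refine hm.trans ?_
    have h2 : Real.toNNReal (ν (C₁ ∪ C₂)) ≤ Real.toNNReal (ν C₁ + ν C₂) :=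
      Real.toNNReal_mono (hsub C₁ C₂)
    refine h2.trans ?_
    rw [Real.toNNReal_add (hν0 C₁) (hν0 C₂)]
  have hsup_disjoint : ∀ K₁ K₂ : Compacts (Subgroup Γ), Disjoint (K₁ : Set (Subgroup Γ)) K₂ →
      IsClosed (K₁ : Set (Subgroup Γ)) → IsClosed (K₂ : Set (Subgroup Γ)) →
      lam (K₁ ⊔ K₂) = lam K₁ + lam K₂ := by
    intro K₁ K₂ hdis hcl₁ hcl₂
    refine le_antisymm (hsup_le K₁ K₂) ?_
    obtain ⟨D, hD, hK₁D, hDK₂⟩ := exists_clopen_between K₁.2 hcl₂.isOpen_compl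
      (fun x hx => Set.disjoint_left.mp hdis hx)
    refine le_csInf (hne _) ?_
    rintro x ⟨C, ⟨hC, hKC⟩, rfl⟩
    rw [Compacts.coe_sup] at hKC
    have h₁ : lam K₁ ≤ Real.toNNReal (ν (C ∩ D)) := by
      refine hlam_le _ _ (hC.inter hD) ?_
      intro x hx
      exact ⟨hKC (Set.mem_union_left _ hx), hK₁D hx⟩
    have h₂ : lam K₂ ≤ Real.toNNReal (ν (C \ D)) := by
      refine hlam_le _ _ (hC.diff hD) ?_
      intro x hx
      exact ⟨hKC (Set.mem_union_right _ hx), fun hxD => hDK₂ hxD hx⟩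
    have hdd : Disjoint (C ∩ D) (C \ D) := by
      rw [Set.disjoint_left]
      rintro x ⟨-, hxD⟩ ⟨-, hxD'⟩
      exact hxD' hxD
    have hνC : ν (C ∩ D) + ν (C \ D) = ν C := by
      rw [← hν_add _ _ hdd, Set.inter_union_diff]
    calc lam K₁ + lam K₂ ≤ Real.toNNReal (ν (C ∩ D)) + Real.toNNReal (ν (C \ D)) :=
          add_le_add h₁ h₂
      _ = Real.toNNReal (ν (C ∩ D) + ν (C \ D)) :=
          (Real.toNNReal_add (hν0 _) (hν0 _)).symm
      _ = Real.toNNReal (ν C) := by rw [hνC]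
  set mc : MeasureTheory.Content (Subgroup Γ) :=
    ⟨lam, hmono, hsup_disjoint, hsup_le⟩ with hmc_def
  have hmcK : ∀ K : Compacts (Subgroup Γ), mc.toFun K = lam K := fun K => by rw [hmc_def]
  have hlam_le_one : ∀ K : Compacts (Subgroup Γ), lam K ≤ 1 := by
    intro K
    have := hlam_le K Set.univ isClopen_univ (Set.subset_univ _)
    rwa [hν_univ, Real.toNNReal_one] at this
  have houter_univ : mc.outerMeasure Set.univ = 1 := by
    have h1 : mc.outerMeasure Set.univ = mc.innerContent ⟨Set.univ, isOpen_univ⟩ :=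
      mc.outerMeasure_opens ⟨Set.univ, isOpen_univ⟩
    rw [h1]
    refine le_antisymm ?_ ?_
    · rw [MeasureTheory.Content.innerContent]
      refine iSup₂_le ?_
      intro K _
      change ((mc.toFun K : NNReal) : ENNReal) ≤ 1
      simp only [hmcK]
      exact_mod_cast ENNReal.coe_le_coe.mpr (hlam_le_one K)
    · rw [MeasureTheory.Content.innerContent]
      have hval : (1 : ENNReal) ≤ (mc.toFun ⟨Set.univ, isCompact_univ⟩ : ENNReal) := by
        have h3 : (1 : NNReal) ≤ lam ⟨Set.univ, isCompact_univ⟩ := by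
          refine hlam_ge _ _ ?_
          intro C hC hKC
          have hCeq : C = Set.univ := Set.univ_subset_iff.mp hKC
          rw [hCeq, hν_univ, Real.toNNReal_one]
        rw [hmcK]
        exact_mod_cast ENNReal.coe_le_coe.mpr h3
      refine hval.trans ?_
      exact le_iSup₂_of_le ⟨Set.univ, isCompact_univ⟩ (by simp) le_rfl
  have hprob : IsProbabilityMeasure mc.measure := by
    constructor
    rw [MeasureTheory.Content.measure_apply _ MeasurableSet.univ]
    exact houter_univ
  have hZmeas : MeasurableSet Z := hZc.measurableSet
  have hZcompl : mc.measure Zᶜ = 0 := by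
    rw [MeasureTheory.Content.measure_apply _ hZmeas.compl]
    have h1 : mc.outerMeasure Zᶜ = mc.innerContent ⟨Zᶜ, hZc.isOpen_compl⟩ :=
      mc.outerMeasure_opens ⟨Zᶜ, hZc.isOpen_compl⟩
    rw [h1, MeasureTheory.Content.innerContent]
    refine le_antisymm ?_ zero_le
    refine iSup₂_le ?_
    intro K hK
    obtain ⟨D, hD, hKD, hDZ⟩ := exists_clopen_between K.2 hZc.isOpen_compl hK
    have hν_D : ν D = 0 := by
      refine hν_zero D ?_
      rw [Set.eq_empty_iff_forall_notMem]
      rintro x ⟨hxD, hxZ⟩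
      exact hDZ hxD hxZ
    have := hlam_le K D hD hKD
    rw [hν_D, Real.toNNReal_zero] at this
    have hz : lam K = 0 := le_antisymm this zero_le
    change ((lam K : NNReal) : ENNReal) ≤ 0
    simp [hmcK, hz]
  have hZone : mc.measure Z = 1 := by
    have hadd := measure_add_measure_compl (μ := mc.measure) hZmeas
    rw [hZcompl, add_zero] at hadd
    rw [hadd]
    exact hprob.measure_univ
  have hlam_map_le : ∀ (g : Γ) (K : Compacts (Subgroup Γ)),
      lam (K.map (conjHomeo g) (conjHomeo g).continuous) ≤ lam K := by
    intro g K
    refine hlam_ge _ _ ?_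
    intro C hC hKC
    have hD : IsClopen ((conjSub g⁻¹ : Subgroup Γ → Subgroup Γ) ⁻¹' C) :=
      hC.preimage (continuous_conjSub g⁻¹)
    have him : ((K.map (conjHomeo g) (conjHomeo g).continuous : Compacts (Subgroup Γ)) :
        Set (Subgroup Γ)) ⊆ (conjSub g⁻¹ : Subgroup Γ → Subgroup Γ) ⁻¹' C := by
      rintro x ⟨y, hy, rfl⟩
      show conjSub g⁻¹ (conjSub g y) ∈ C
      rw [conjSub_conjSub, inv_mul_cancel, conjSub_one]
      exact hKC hy
    have := hlam_le _ _ hD him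
    rwa [hν_inv g⁻¹ C hC] at this
  have hlam_map : ∀ (g : Γ) (K : Compacts (Subgroup Γ)),
      lam (K.map (conjHomeo g) (conjHomeo g).continuous) = lam K := by
    intro g K
    refine le_antisymm (hlam_map_le g K) ?_
    have h2 := hlam_map_le g⁻¹ (K.map (conjHomeo g) (conjHomeo g).continuous)
    have heq : (K.map (conjHomeo g) (conjHomeo g).continuous).map
        (conjHomeo g⁻¹) (conjHomeo g⁻¹).continuous = K := by
      apply Compacts.ext
      simp only [Compacts.coe_map]
      rw [← Set.image_comp]
      have : ((conjHomeo g⁻¹ : Subgroup Γ → Subgroup Γ) ∘ (conjHomeo g : Subgroup Γ → Subgroup Γ)) = id := by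
        funext x
        show conjSub g⁻¹ (conjSub g x) = x
        rw [conjSub_conjSub, inv_mul_cancel, conjSub_one]
      rw [this, Set.image_id]
    rwa [heq] at h2
  refine ⟨mc.measure, hprob, hZone, ?_⟩
  intro g
  have hmeas : Measurable (conjSub g : Subgroup Γ → Subgroup Γ) :=
    (continuous_conjSub g).measurable
  refine ⟨hmeas, ?_⟩
  refine Measure.ext ?_
  intro s hs
  rw [Measure.map_apply hmeas hs]
  rw [MeasureTheory.Content.measure_apply _ (hmeas hs),
    MeasureTheory.Content.measure_apply _ hs]
  exact mc.outerMeasure_preimage (conjHomeo g)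
    (fun K => by
      show (↑(mc.toFun (K.map (conjHomeo g) (conjHomeo g).continuous)) : ENNReal)
        = ↑(mc.toFun K)
      rw [hmcK, hmcK, hlam_map g K]) s
end ContentPart

/-- a sofic URS of a finitely generated group carries a conjugation-invariant
Borel probability measure, i.e. an invariant random subgroup supported on `Z`. -/
theorem sofic_urs_has_invariant_measure
    {Γ : Type} [Group Γ] {n : ℕ} (γ : Fin n → Γ)
    (hgen : Subgroup.closure (Set.range γ) = ⊤)
    (hsym : ∀ i : Fin n, (γ i)⁻¹ ∈ Set.range γ)
    (Z : Set (Subgroup Γ)) (hZ : IsURS Z) (hsofic : IsSoficURS γ Z) :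
    ∃ μ : Measure (Subgroup Γ),
      IsProbabilityMeasure μ ∧ μ Z = 1 ∧
      ∀ g : Γ, MeasurePreserving (conjSub g) μ μ := by
  classical
  choose V fT nE ρ hρ using fun k : ℕ =>
    hsofic (k+1) (by omega) (((k:ℝ)+1)⁻¹) (by positivity)
  have hZne := hZ.nonempty
  have hΦex : ∀ k : ℕ, ∃ Φ : V k → Subgroup Γ, (∀ p, Φ p ∈ Z) ∧
      (∀ p : V k, IsZRVertex γ Z (ρ k) (k+1) p →
        ∀ w w' : FreeGroup (Fin n), wordLength w ≤ k+1 → wordLength w' ≤ k+1 →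
        ((ρ k) w p = (ρ k) w' p ↔
          (QuotientGroup.mk (FreeGroup.lift γ w) : Γ ⧸ (Φ p)) =
            QuotientGroup.mk (FreeGroup.lift γ w'))) := by
    intro k
    refine ⟨fun p => if h : IsZRVertex γ Z (ρ k) (k+1) p then h.choose else hZne.choose,
      ?_, ?_⟩
    · intro p
      show (if h : IsZRVertex γ Z (ρ k) (k+1) p then h.choose else hZne.choose) ∈ Z
      by_cases h : IsZRVertex γ Z (ρ k) (k+1) p
      · rw [dif_pos h]; exact h.choose_spec.1
      · rw [dif_neg h]; exact hZne.choose_spec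
    · intro p h
      have hEq : (fun p => if h : IsZRVertex γ Z (ρ k) (k+1) p then h.choose
          else hZne.choose) p = h.choose := dif_pos h
      rw [hEq]
      exact h.choose_spec.2
  choose Φ hΦZ hwit using hΦex
  choose wd hwd using lift_surj γ hgen
  have hf0 : ∀ (A : Set (Subgroup Γ)) (k : ℕ), 0 ≤ @fracD Γ _ (V k) (fT k) (Φ k) A := by
    intro A k
    letI := fT k; letI := nE k
    exact fracD_nonneg (Φ k) A
  have hf1 : ∀ (A : Set (Subgroup Γ)) (k : ℕ), @fracD Γ _ (V k) (fT k) (Φ k) A ≤ 1 := by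
    intro A k
    letI := fT k; letI := nE k
    exact fracD_le_one (Φ k) A
  refine measure_from_nu Z hZ.closed
    (fun A => limUlt (fun k => @fracD Γ _ (V k) (fT k) (Φ k) A)) ?_ ?_ ?_ ?_ ?_
  · -- nonneg
    intro A
    exact limUlt_nonneg (hf0 A) (hf1 A)
  · -- univ
    show limUlt (fun k => @fracD Γ _ (V k) (fT k) (Φ k) Set.univ) = 1
    have he : (fun k => @fracD Γ _ (V k) (fT k) (Φ k) Set.univ) = fun _ => (1:ℝ) := by
      funext k
      letI := fT k; letI := nE k
      exact fracD_univ (Φ k)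
    rw [he]
    exact limUlt_const 1 zero_le_one le_rfl
  · -- additivity
    intro A B hAB
    show limUlt (fun k => @fracD Γ _ (V k) (fT k) (Φ k) (A ∪ B)) =
      limUlt (fun k => @fracD Γ _ (V k) (fT k) (Φ k) A) +
        limUlt (fun k => @fracD Γ _ (V k) (fT k) (Φ k) B)
    refine limUlt_add (hf0 A) (hf1 A) (hf0 B) (hf1 B) (hf0 _) (hf1 _) ?_
    intro k
    letI := fT k; letI := nE k
    exact fracD_add (Φ k) hAB
  · -- zero on sets missing Z
    intro A hA
    show limUlt (fun k => @fracD Γ _ (V k) (fT k) (Φ k) A) = 0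
    have he : (fun k => @fracD Γ _ (V k) (fT k) (Φ k) A) = fun _ => (0:ℝ) := by
      funext k
      letI := fT k; letI := nE k
      exact fracD_zero (Φ k) (hΦZ k) hA
    rw [he]
    exact limUlt_const 0 le_rfl zero_le_one
  · -- invariance
    intro g C hC
    show limUlt (fun k => @fracD Γ _ (V k) (fT k) (Φ k) (conjSub g ⁻¹' C)) =
      limUlt (fun k => @fracD Γ _ (V k) (fT k) (Φ k) C)
    obtain ⟨A, hsupp⟩ := clopen_support hC
    refine limUlt_eq_of_tendsto_sub (hf0 _) (hf1 _) (hf0 _) (hf1 _) ?_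
    set k₀ := (A.sup fun a => wordLength (wd a)) + wordLength (wd g) with hk₀
    have hb : ∀ k : ℕ, k₀ ≤ k →
        |@fracD Γ _ (V k) (fT k) (Φ k) (conjSub g ⁻¹' C) -
          @fracD Γ _ (V k) (fT k) (Φ k) C| ≤ 2 * (((k:ℝ)+1)⁻¹) := by
      intro k hk
      have hrk : ∀ a ∈ A, wordLength (wd a) + wordLength (wd g) ≤ k+1 := by
        intro a ha
        have h1 : wordLength (wd a) ≤ A.sup fun a => wordLength (wd a) :=
          Finset.le_sup (f := fun a => wordLength (wd a)) ha
        omega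
      letI := fT k; letI := nE k
      exact per_k_bound' (Φ k) γ Z (ρ k) (k+1) (((k:ℝ)+1)⁻¹) (hρ k) (hwit k)
        g (wd g) (hwd g) C A hsupp wd hwd hrk
    have h2 : Filter.Tendsto (fun k : ℕ => 2 * (((k:ℝ)+1)⁻¹)) Filter.atTop (nhds 0) := by
      have h3 := tendsto_one_div_add_atTop_nhds_zero_nat (𝕜 := ℝ)
      have h4 := h3.const_mul (2:ℝ)
      simpa [one_div] using h4
    refine squeeze_zero_norm' ?_ h2
    filter_upwards [Filter.eventually_ge_atTop k₀] with k hk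
    simpa [Real.norm_eq_abs] using hb k hk
end

section
/- For every d ≥ 1 there exists a constant C(d) such that every simple graph (finite or infinite) with all vertex degrees at most d admits a nonrepetitive vertex coloring using an alphabet of C(d) colors. -/
/-- A vertex coloring `c` of a simple graph is nonrepetitive if there is no path
`x₁, …, x_{2n}` (vertices pairwise distinct, consecutive vertices adjacent) with
`c(xᵢ) = c(x_{n+i})` for all `1 ≤ i ≤ n`. (Indices below start at `0`.) -/
def Nonrepetitive {V K : Type*} (G : SimpleGraph V) (c : V → K) : Prop :=
  ∀ n : ℕ, 0 < n → ∀ x : ℕ → V,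
    (∀ i j, i < 2 * n → j < 2 * n → i ≠ j → x i ≠ x j) →
    (∀ i, i + 1 < 2 * n → G.Adj (x i) (x (i + 1))) →
    ∃ i < n, c (x i) ≠ c (x (n + i))

namespace NonrepAux

open Finset

section Defs

variable {V : Type} (G : SimpleGraph V) (C : ℕ)

/-- `c` is nonrepetitive on all paths whose vertices lie in `S`. -/
def GoodOn (S : Finset V) (c : V → Fin C) : Prop :=
  ∀ n : ℕ, 0 < n → ∀ x : ℕ → V,
    (∀ i j, i < 2 * n → j < 2 * n → i ≠ j → x i ≠ x j) →
    (∀ i, i + 1 < 2 * n → G.Adj (x i) (x (i + 1))) →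
    (∀ i, i < 2 * n → x i ∈ S) →
    ∃ i < n, c (x i) ≠ c (x (n + i))

variable {G C}

lemma GoodOn.mono {S T : Finset V} {c : V → Fin C} (h : GoodOn G C T c) (hST : S ⊆ T) :
    GoodOn G C S c := fun n hn x hinj hadj hmem =>
  h n hn x hinj hadj (fun i hi => hST (hmem i hi))

lemma GoodOn.congr {S : Finset V} {c c' : V → Fin C} (h : GoodOn G C S c)
    (hcc : ∀ u ∈ S, c' u = c u) : GoodOn G C S c' := by
  intro n hn x hinj hadj hmem
  obtain ⟨i, hi, hne⟩ := h n hn x hinj hadj hmem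
  refine ⟨i, hi, ?_⟩
  rw [hcc _ (hmem i (by omega)), hcc _ (hmem (n + i) (by omega))]
  exact hne

lemma goodOn_empty (c : V → Fin C) : GoodOn G C (∅ : Finset V) c := by
  intro n hn x _ _ hmem
  exact absurd (hmem 0 (by omega)) (by simp)

variable (G) in
/-- `y` restricted to `[0, 2t)` is a path in `S` through `v`. -/
def IsPathOn (t : ℕ) (S : Finset V) (v : V) (y : ℕ → V) : Prop :=
  (∀ i j, i < 2 * t → j < 2 * t → i ≠ j → y i ≠ y j) ∧
  (∀ i, i + 1 < 2 * t → G.Adj (y i) (y (i + 1))) ∧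
  (∀ i, i < 2 * t → y i ∈ S) ∧ (∃ j, j < 2 * t ∧ y j = v)

variable {d : ℕ}

def chainF (f : V → Fin d → V) (g : ℕ → Fin d) (v : V) : ℕ → V
  | 0 => v
  | k + 1 => f (chainF f g v k) (g k)

/-- Decode a code `κ` into a function `ℕ → V`. -/
def decode (f : V → Fin d → V) (v : V) (d0 : Fin d) (t : ℕ)
    (κ : Fin (2 * t) × (Fin (2 * t) → Fin d × Fin d)) : ℕ → V :=
  let j := κ.1.val
  let σ : ℕ → Fin d × Fin d := fun i => if h : i < 2 * t then κ.2 ⟨i, h⟩ else (d0, d0)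
  fun i =>
    if j ≤ i then chainF f (fun k => (σ (j + k)).1) v (i - j)
    else chainF f (fun k => (σ (j - 1 - k)).2) v (j - i)

lemma exists_code (f : V → Fin d → V) (hf : ∀ u w, G.Adj u w → ∃ k, f u k = w)
    (d0 : Fin d) {t : ℕ} (y : ℕ → V)
    (hadj : ∀ i, i + 1 < 2 * t → G.Adj (y i) (y (i + 1)))
    {j : ℕ} (hj : j < 2 * t) :
    ∃ κ : Fin (2 * t) × (Fin (2 * t) → Fin d × Fin d),
      ∀ i, i < 2 * t → decode f (y j) d0 t κ i = y i := by
  have hfwd : ∀ i, i + 1 < 2 * t → ∃ k, f (y i) k = y (i + 1) :=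
    fun i hi => hf _ _ (hadj i hi)
  have hbwd : ∀ i, i + 1 < 2 * t → ∃ k, f (y (i + 1)) k = y i :=
    fun i hi => hf _ _ (hadj i hi).symm
  refine ⟨⟨⟨j, hj⟩, fun i => if h : i.val + 1 < 2 * t then
      (Classical.choose (hfwd i.val h), Classical.choose (hbwd i.val h)) else (d0, d0)⟩, ?_⟩
  intro i hi
  unfold decode
  simp only
  set σ : ℕ → Fin d × Fin d := fun i => if h : i < 2 * t then
      (if h' : i + 1 < 2 * t then
        (Classical.choose (hfwd i h'), Classical.choose (hbwd i h')) else (d0, d0)) else (d0, d0)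
    with hσ
  have hF : ∀ k, j + k < 2 * t → chainF f (fun k => (σ (j + k)).1) (y j) k = y (j + k) := by
    intro k
    induction k with
    | zero => intro _; rfl
    | succ k ih =>
      intro hk
      have h1 : j + k < 2 * t := by omega
      have h2 : j + k + 1 < 2 * t := by omega
      show f (chainF f (fun k => (σ (j + k)).1) (y j) k) (σ (j + k)).1 = _
      rw [ih h1, hσ]
      simp only [dif_pos h1, dif_pos h2]
      exact Classical.choose_spec (hfwd (j + k) h2)
  have hB : ∀ k, k ≤ j → chainF f (fun k => (σ (j - 1 - k)).2) (y j) k = y (j - k) := by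
    intro k
    induction k with
    | zero => intro _; simp [chainF]
    | succ k ih =>
      intro hk
      have h1 : k ≤ j := by omega
      have h2 : j - 1 - k < 2 * t := by omega
      have h3 : (j - 1 - k) + 1 < 2 * t := by omega
      show f (chainF f (fun k => (σ (j - 1 - k)).2) (y j) k) (σ (j - 1 - k)).2 = _
      rw [ih h1, hσ]
      simp only [dif_pos h2, dif_pos h3]
      have he2 : j - k = j - 1 - k + 1 := by omega
      rw [he2, Classical.choose_spec (hbwd (j - 1 - k) h3)]
      congr 1
      omega
  by_cases hji : j ≤ i
  · rw [if_pos hji]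
    have := hF (i - j) (by omega)
    rw [this]
    congr 1
    omega
  · rw [if_neg hji]
    have := hB (j - i) (by omega)
    rw [this]
    congr 1
    omega

variable [Fintype V] [DecidableEq V] (G C)

open scoped Classical in
/-- The number of colorings that are good on `S`. -/
noncomputable def Ncnt (S : Finset V) : ℕ := #(univ.filter (GoodOn G C S))

lemma ncnt_empty : Ncnt G C (∅ : Finset V) = C ^ Fintype.card V := by
  classical
  rw [Ncnt]
  rw [filter_true_of_mem (fun c _ => goodOn_empty c)]
  simp [Fintype.card_fun]

open scoped Classical in
noncomputable def badW (S : Finset V) (v : V) (t : ℕ) (y : ℕ → V) : Finset (V → Fin C) :=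
  univ.filter (fun c => GoodOn G C (S.erase v) c ∧ IsPathOn G t S v y ∧
    ∀ i < t, c (y i) = c (y (t + i)))

end Defs

section PerPath

variable {V : Type} [Fintype V] [DecidableEq V] {G : SimpleGraph V} {C : ℕ}

open scoped Classical in
lemma per_path {S : Finset V} {v : V} {t : ℕ} (ht : 0 < t) {y : ℕ → V}
    (hP : IsPathOn G t S v y) :
    ∃ H : Finset V, v ∈ H ∧ H ⊆ S ∧ H.card = t ∧
      (badW G C S v t y).card * C ^ t ≤ Ncnt G C (S \ H) := by
  obtain ⟨hinj, hadj, hmem, j₀, hj₀, hj₀v⟩ := hP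
  have hyeq : ∀ a b, a < 2 * t → b < 2 * t → y a = y b → a = b := by
    intro a b ha hb h
    by_contra hne
    exact hinj a b ha hb hne h
  set o : ℕ := if j₀ < t then 0 else t with ho
  have ho2 : ∀ i : Fin t, o + i.val < 2 * t := by
    intro i; have := i.isLt; split_ifs at ho <;> omega
  set o' : ℕ := t - o with ho'
  have hoo' : ∀ i : Fin t, o' + i.val < 2 * t := by
    intro i; have := i.isLt; split_ifs at ho <;> omega
  set H : Finset V := (range t).image (fun i => y (o + i)) with hH
  have hvH : v ∈ H := by
    rw [hH, mem_image]
    refine ⟨j₀ - o, by simp; split_ifs at ho <;> omega, ?_⟩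
    rw [show o + (j₀ - o) = j₀ by split_ifs at ho <;> omega, hj₀v]
  have hHS : H ⊆ S := by
    intro u hu
    rw [hH, mem_image] at hu
    obtain ⟨i, hi, rfl⟩ := hu
    simp at hi
    exact hmem _ (by split_ifs at ho <;> omega)
  have hHcard : H.card = t := by
    rw [hH, card_image_of_injOn, card_range]
    intro a ha b hb h
    simp at ha hb
    have := hyeq (o + a) (o + b) (by split_ifs at ho <;> omega) (by split_ifs at ho <;> omega) h
    omega
  have hmemH : ∀ u, u ∈ H ↔ ∃ i : Fin t, y (o + i.val) = u := by
    intro u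
    rw [hH, mem_image]
    constructor
    · rintro ⟨i, hi, rfl⟩; simp at hi; exact ⟨⟨i, hi⟩, rfl⟩
    · rintro ⟨i, rfl⟩; exact ⟨i.val, by simp [i.isLt], rfl⟩
  refine ⟨H, hvH, hHS, hHcard, ?_⟩
  set Φ : (V → Fin C) × (Fin t → Fin C) → (V → Fin C) := fun p u =>
    if h : ∃ i : Fin t, y (o + i.val) = u then p.2 (Classical.choose h) else p.1 u with hΦ
  have k1 : ∀ p (i : Fin t), Φ p (y (o + i.val)) = p.2 i := by
    intro p i
    have h : ∃ i' : Fin t, y (o + i'.val) = y (o + i.val) := ⟨i, rfl⟩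
    simp only [hΦ]
    rw [dif_pos h]
    have hci : Classical.choose h = i := by
      have hcs := Classical.choose_spec h
      have := hyeq _ _ (ho2 _) (ho2 i) hcs
      exact Fin.ext (by omega)
    rw [hci]
  have k2 : ∀ p u, u ∉ H → Φ p u = p.1 u := by
    intro p u hu
    simp only [hΦ]
    rw [dif_neg]
    intro h
    exact hu ((hmemH u).2 h)
  have hother : ∀ i : Fin t, y (o' + i.val) ∉ H := by
    intro i hin
    rw [hmemH] at hin
    obtain ⟨i', hi'⟩ := hin
    have := hyeq _ _ (ho2 i') (hoo' i) hi'
    have h1 := i.isLt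
    have h2 := i'.isLt
    split_ifs at ho <;> omega
  have hSH : S \ H ⊆ S.erase v := by
    intro u hu
    rw [mem_sdiff] at hu
    rw [mem_erase]
    exact ⟨fun h => hu.2 (h ▸ hvH), hu.1⟩
  have hmaps : ∀ p ∈ (badW G C S v t y) ×ˢ (univ : Finset (Fin t → Fin C)),
      Φ p ∈ univ.filter (GoodOn G C (S \ H)) := by
    rintro p hp
    rw [mem_product, badW, mem_filter] at hp
    obtain ⟨⟨-, hgood, -, -⟩, -⟩ := hp
    rw [mem_filter]
    refine ⟨mem_univ _, (hgood.mono hSH).congr ?_⟩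
    intro u hu
    exact k2 p u (fun h => (mem_sdiff.1 hu).2 h)
  have hinjOn : Set.InjOn Φ ↑((badW G C S v t y) ×ˢ (univ : Finset (Fin t → Fin C))) := by
    intro p hp q hq heq
    simp only [coe_product, Set.mem_prod, mem_coe] at hp hq
    rw [badW, mem_filter] at hp hq
    obtain ⟨⟨-, -, -, hrep⟩, -⟩ := hp
    obtain ⟨⟨-, -, -, hreq⟩, -⟩ := hq
    have h2 : p.2 = q.2 := by
      funext i
      rw [← k1 p i, heq, k1 q i]
    have h1 : p.1 = q.1 := by
      funext u
      by_cases hu : u ∈ H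
      · obtain ⟨i, rfl⟩ := (hmemH u).1 hu
        have hstep : ∀ r : (V → Fin C) × (Fin t → Fin C),
            (∀ i < t, r.1 (y i) = r.1 (y (t + i))) →
            r.1 (y (o + i.val)) = r.1 (y (o' + i.val)) := by
          intro r hr
          have := hr i.val i.isLt
          split_ifs at ho with hc
          · rw [ho'] at *
            simpa [ho] using this
          · rw [ho'] at *
            simp only [ho] at *
            simpa using this.symm
        calc p.1 (y (o + i.val)) = p.1 (y (o' + i.val)) := hstep p hrep
          _ = Φ p (y (o' + i.val)) := (k2 p _ (hother i)).symm
          _ = Φ q (y (o' + i.val)) := by rw [heq]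
          _ = q.1 (y (o' + i.val)) := k2 q _ (hother i)
          _ = q.1 (y (o + i.val)) := (hstep q hreq).symm
      · rw [← k2 p u hu, heq, k2 q u hu]
    exact Prod.ext h1 h2
  have hcard := card_le_card_of_injOn Φ hmaps hinjOn
  rw [card_product, card_univ] at hcard
  simpa [Ncnt, Fintype.card_fun] using hcard

open scoped Classical in
lemma ncnt_erase_eq {S : Finset V} {v : V} (hv : v ∈ S) :
    Ncnt G C (S.erase v) = Ncnt G C S +
      #(univ.filter (fun c : V → Fin C => GoodOn G C (S.erase v) c ∧ ¬ GoodOn G C S c)) := by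
  have h := card_filter_add_card_filter_not
    (s := univ.filter (GoodOn G C (S.erase v))) (p := GoodOn G C S)
  rw [filter_filter, filter_filter] at h
  have h1 : univ.filter (fun c : V → Fin C => GoodOn G C (S.erase v) c ∧ GoodOn G C S c) =
      univ.filter (GoodOn G C S) := by
    apply filter_congr
    intro c _
    constructor
    · exact fun h => h.2
    · exact fun h => ⟨h.mono (erase_subset _ _), h⟩
  rw [h1] at h
  rw [Ncnt, Ncnt, ← h]

open scoped Classical in
lemma cover {d : ℕ} (hd : 1 ≤ d) (f : V → Fin d → V)
    (hf : ∀ u w, G.Adj u w → ∃ k, f u k = w) (S : Finset V) (v : V) :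
    univ.filter (fun c : V → Fin C => GoodOn G C (S.erase v) c ∧ ¬ GoodOn G C S c) ⊆
    ((Icc 1 (Fintype.card V)).sigma
        (fun t => (univ : Finset (Fin (2 * t) × (Fin (2 * t) → Fin d × Fin d))))).biUnion
      (fun p => badW G C S v p.1 (decode f v ⟨0, hd⟩ p.1 p.2)) := by
  intro c hc
  rw [mem_filter] at hc
  obtain ⟨-, hgood, hbad⟩ := hc
  rw [GoodOn] at hbad
  push_neg at hbad
  obtain ⟨n, hn, x, hinj, hadj, hmem, hrep⟩ := hbad
  have hvpath : ∃ j, j < 2 * n ∧ x j = v := by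
    by_contra hno
    push_neg at hno
    obtain ⟨i, hi, hne⟩ := hgood n hn x hinj hadj
      (fun i hi => mem_erase.2 ⟨hno i hi, hmem i hi⟩)
    exact hne (hrep i hi)
  obtain ⟨j, hj, hjv⟩ := hvpath
  have h2n : 2 * n ≤ Fintype.card V := by
    have hinj2 : Set.InjOn x ↑(range (2 * n)) := by
      intro a ha b hb hab
      simp only [coe_range, Set.mem_Iio] at ha hb
      by_contra hne
      exact hinj a b ha hb hne hab
    calc 2 * n = #((range (2 * n)).image x) := by rw [card_image_of_injOn hinj2, card_range]
      _ ≤ Fintype.card V := card_le_univ _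
  obtain ⟨κ, hκ⟩ := exists_code (G := G) f hf ⟨0, hd⟩ (t := n) x hadj hj
  rw [hjv] at hκ
  refine mem_biUnion.2 ⟨⟨n, κ⟩, mem_sigma.2 ⟨mem_Icc.2 ⟨hn, (by omega : n ≤ Fintype.card V)⟩, mem_univ _⟩, ?_⟩
  show c ∈ badW G C S v n (decode f v ⟨0, hd⟩ n κ)
  rw [badW, mem_filter]
  refine ⟨mem_univ _, hgood, ⟨?_, ?_, ?_, ?_⟩, ?_⟩
  · intro a b ha hb hne
    rw [hκ a ha, hκ b hb]
    exact hinj a b ha hb hne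
  · intro i hi
    rw [hκ i (by omega), hκ (i + 1) hi]
    exact hadj i hi
  · intro i hi
    rw [hκ i hi]
    exact hmem i hi
  · exact ⟨j, hj, by rw [hκ j hj, hjv]⟩
  · intro i hi
    rw [hκ i (by omega), hκ (n + i) (by omega)]
    exact hrep i hi

end PerPath


section Arith

lemma arith1 (t d : ℕ) (ht : 1 ≤ t) (hd : 1 ≤ d) :
    16 ^ t * (2 * t * ((d * d) ^ (2 * t)) * 2 ^ (t - 1)) ≤ (64 * d ^ 4) ^ t := by
  have h1 : (d * d) ^ (2 * t) = d ^ (4 * t) := by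
    rw [show d * d = d ^ 2 by ring, ← pow_mul]
    ring_nf
  have h2 : 2 * 2 ^ (t - 1) = 2 ^ t := by
    rw [← pow_succ']
    congr 1
    omega
  have h3 : t ≤ 2 ^ t := Nat.le_of_lt ((Nat.lt_two_pow_self (n := t)))
  calc 16 ^ t * (2 * t * ((d * d) ^ (2 * t)) * 2 ^ (t - 1))
      = t * (2 * 2 ^ (t - 1)) * 16 ^ t * d ^ (4 * t) := by rw [h1]; ring
    _ = t * 2 ^ t * 16 ^ t * d ^ (4 * t) := by rw [h2]
    _ ≤ 2 ^ t * 2 ^ t * 16 ^ t * d ^ (4 * t) := by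
        exact Nat.mul_le_mul_right _ (Nat.mul_le_mul_right _ (Nat.mul_le_mul_right _ h3))
    _ = (64 * d ^ 4) ^ t := by
        rw [show (64 : ℕ) = 2 * 2 * 16 by norm_num, mul_pow, mul_pow, mul_pow, pow_mul]

lemma geo_eq (M : ℕ) :
    ∑ t ∈ Finset.Icc 1 M, ((16 : ℚ)⁻¹) ^ t = (1 - ((16 : ℚ)⁻¹) ^ M) / 15 := by
  induction M with
  | zero => simp
  | succ M ih =>
    rw [Finset.sum_Icc_succ_top (by omega), ih, pow_succ]
    field_simp
    ring

lemma geo (M : ℕ) : ∑ t ∈ Finset.Icc 1 M, ((16 : ℚ)⁻¹) ^ t ≤ 1 / 15 := by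
  rw [geo_eq]
  have : (0 : ℚ) ≤ ((16 : ℚ)⁻¹) ^ M := by positivity
  linarith

end Arith

section Key

variable {V : Type} [Fintype V] [DecidableEq V] {G : SimpleGraph V}

open scoped Classical in
lemma key {d : ℕ} (hd : 1 ≤ d) (f : V → Fin d → V)
    (hf : ∀ u w, G.Adj u w → ∃ k, f u k = w) :
    ∀ m : ℕ, ∀ S : Finset V, S.card ≤ m → ∀ v ∈ S,
      Ncnt G (64 * d ^ 4) (S.erase v) ≤ 2 * Ncnt G (64 * d ^ 4) S := by
  intro m
  induction m with
  | zero =>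
    intro S hS v hv
    rw [Nat.le_zero, card_eq_zero] at hS
    subst hS
    simp at hv
  | succ m ih =>
    intro S hS v hv
    set C := 64 * d ^ 4 with hC
    have hCpos : 0 < C := by positivity
    set N₀ := Ncnt G C (S.erase v) with hN₀
    -- chain bound for further removals
    have chain : ∀ B : Finset V, B ⊆ S.erase v →
        Ncnt G C ((S.erase v) \ B) ≤ 2 ^ B.card * N₀ := by
      intro B
      induction B using Finset.induction_on with
      | empty => intro _; simp [hN₀]
      | @insert u B hu ihB =>
        intro hsub
        have husub : u ∈ S.erase v \ B := by
          rw [mem_sdiff]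
          exact ⟨hsub (mem_insert_self u B), hu⟩
        have hcard : (S.erase v \ B).card ≤ m := by
          have h1 : (S.erase v).card = S.card - 1 := card_erase_of_mem hv
          have h2 : (S.erase v \ B).card ≤ (S.erase v).card := card_le_card sdiff_subset
          have h3 : 0 < S.card := card_pos.2 ⟨v, hv⟩
          omega
        have hstep := ih (S.erase v \ B) hcard u husub
        rw [sdiff_insert]
        calc Ncnt G C ((S.erase v \ B).erase u) ≤ 2 * Ncnt G C (S.erase v \ B) := hstep
          _ ≤ 2 * (2 ^ B.card * N₀) :=
              Nat.mul_le_mul_left _ (ihB (fun a ha => hsub (mem_insert_of_mem ha)))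
          _ = 2 ^ (insert u B).card * N₀ := by
              rw [card_insert_of_notMem hu, pow_succ]
              ring
    -- per-code bound
    have per : ∀ t, 1 ≤ t → ∀ κ : Fin (2 * t) × (Fin (2 * t) → Fin d × Fin d),
        (badW G C S v t (decode f v ⟨0, hd⟩ t κ)).card * C ^ t ≤ 2 ^ (t - 1) * N₀ := by
      intro t ht κ
      by_cases hP : IsPathOn G t S v (decode f v ⟨0, hd⟩ t κ)
      · obtain ⟨H, hvH, hHS, hHcard, hle⟩ := per_path (C := C) (by omega) hP
        have hHsub : H.erase v ⊆ S.erase v := erase_subset_erase _ hHS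
        have heq : S \ H = (S.erase v) \ (H.erase v) := by
          ext u
          simp only [mem_sdiff, mem_erase]
          constructor
          · rintro ⟨huS, huH⟩
            exact ⟨⟨fun h => huH (h ▸ hvH), huS⟩, fun h => huH h.2⟩
          · rintro ⟨⟨hne, huS⟩, hcon⟩
            exact ⟨huS, fun h => hcon ⟨hne, h⟩⟩
        have hchain := chain (H.erase v) hHsub
        rw [heq] at hle
        have hcarde : (H.erase v).card = t - 1 := by rw [card_erase_of_mem hvH, hHcard]
        calc (badW G C S v t (decode f v ⟨0, hd⟩ t κ)).card * C ^ t
            ≤ Ncnt G C ((S.erase v) \ (H.erase v)) := hle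
          _ ≤ 2 ^ (t - 1) * N₀ := by rw [← hcarde]; exact hchain
      · have hempty : badW G C S v t (decode f v ⟨0, hd⟩ t κ) = ∅ := by
          apply eq_empty_of_forall_notMem
          intro c hc
          rw [badW, mem_filter] at hc
          exact hP hc.2.2.1
        rw [hempty]
        simp
    -- decomposition and cover
    have hdecomp := ncnt_erase_eq (G := G) (C := C) hv
    set Bad := univ.filter
      (fun c : V → Fin C => GoodOn G C (S.erase v) c ∧ ¬ GoodOn G C S c) with hBad
    have hcover := cover (G := G) (C := C) hd f hf S v
    have hbadcard : #Bad ≤ ∑ t ∈ Icc 1 (Fintype.card V),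
        ∑ κ : Fin (2 * t) × (Fin (2 * t) → Fin d × Fin d),
          (badW G C S v t (decode f v ⟨0, hd⟩ t κ)).card := by
      calc #Bad ≤ #(((Icc 1 (Fintype.card V)).sigma
            (fun t => (univ : Finset (Fin (2 * t) × (Fin (2 * t) → Fin d × Fin d))))).biUnion
            (fun p => badW G C S v p.1 (decode f v ⟨0, hd⟩ p.1 p.2))) := card_le_card hcover
        _ ≤ ∑ p ∈ (Icc 1 (Fintype.card V)).sigma
              (fun t => (univ : Finset (Fin (2 * t) × (Fin (2 * t) → Fin d × Fin d)))),
              (badW G C S v p.1 (decode f v ⟨0, hd⟩ p.1 p.2)).card := card_biUnion_le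
        _ = _ := by rw [Finset.sum_sigma]
    -- rational estimate
    have hN₀nn : (0 : ℚ) ≤ (N₀ : ℚ) := Nat.cast_nonneg _
    have hCQ0 : (0 : ℚ) < (C : ℚ) := by exact_mod_cast hCpos
    have hQ : (#Bad : ℚ) ≤ (1 / 15 : ℚ) * N₀ := by
      calc (#Bad : ℚ)
          ≤ ((∑ t ∈ Icc 1 (Fintype.card V),
              ∑ κ : Fin (2 * t) × (Fin (2 * t) → Fin d × Fin d),
                (badW G C S v t (decode f v ⟨0, hd⟩ t κ)).card : ℕ) : ℚ) := by
            exact_mod_cast hbadcard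
        _ = ∑ t ∈ Icc 1 (Fintype.card V),
              ∑ κ : Fin (2 * t) × (Fin (2 * t) → Fin d × Fin d),
                ((badW G C S v t (decode f v ⟨0, hd⟩ t κ)).card : ℚ) := by
            push_cast
            rfl
        _ ≤ ∑ t ∈ Icc 1 (Fintype.card V), ((16 : ℚ)⁻¹) ^ t * N₀ := by
            apply sum_le_sum
            intro t htmem
            rw [mem_Icc] at htmem
            obtain ⟨ht1, -⟩ := htmem
            have hCQ : (0 : ℚ) < (C : ℚ) ^ t := by positivity
            have hkb : ∀ κ : Fin (2 * t) × (Fin (2 * t) → Fin d × Fin d),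
                ((badW G C S v t (decode f v ⟨0, hd⟩ t κ)).card : ℚ) ≤
                  (2 : ℚ) ^ (t - 1) * N₀ / (C : ℚ) ^ t := by
              intro κ
              rw [le_div_iff₀ hCQ]
              exact_mod_cast per t ht1 κ
            have hA : ((Fintype.card (Fin (2 * t) × (Fin (2 * t) → Fin d × Fin d)) : ℕ) : ℚ) =
                (2 * t : ℚ) * ((d : ℚ) * (d : ℚ)) ^ (2 * t) := by
              simp only [Fintype.card_prod, Fintype.card_fun, Fintype.card_fin]
              push_cast
              ring
            have harith : (16 : ℚ) ^ t *
                ((2 * t : ℚ) * ((d : ℚ) * (d : ℚ)) ^ (2 * t) * (2 : ℚ) ^ (t - 1)) ≤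
                (C : ℚ) ^ t := by
              rw [hC]
              exact_mod_cast arith1 t d ht1 hd
            have key2 : (2 * t : ℚ) * ((d : ℚ) * (d : ℚ)) ^ (2 * t) * (2 : ℚ) ^ (t - 1) /
                (C : ℚ) ^ t ≤ ((16 : ℚ)⁻¹) ^ t := by
              rw [div_le_iff₀ hCQ, inv_pow]
              rw [inv_mul_eq_div, le_div_iff₀ (by positivity : (0 : ℚ) < (16 : ℚ) ^ t)]
              calc (2 * t : ℚ) * ((d : ℚ) * (d : ℚ)) ^ (2 * t) * (2 : ℚ) ^ (t - 1) * 16 ^ t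
                  = 16 ^ t * ((2 * t : ℚ) * ((d : ℚ) * (d : ℚ)) ^ (2 * t) * (2 : ℚ) ^ (t - 1)) := by
                    ring
                _ ≤ (C : ℚ) ^ t := harith
            calc ∑ κ : Fin (2 * t) × (Fin (2 * t) → Fin d × Fin d),
                  ((badW G C S v t (decode f v ⟨0, hd⟩ t κ)).card : ℚ)
                ≤ ∑ _κ : Fin (2 * t) × (Fin (2 * t) → Fin d × Fin d),
                  (2 : ℚ) ^ (t - 1) * N₀ / (C : ℚ) ^ t := sum_le_sum (fun κ _ => hkb κ)
              _ = ((Fintype.card (Fin (2 * t) × (Fin (2 * t) → Fin d × Fin d)) : ℕ) : ℚ) *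
                  ((2 : ℚ) ^ (t - 1) * N₀ / (C : ℚ) ^ t) := by
                  rw [sum_const, card_univ, nsmul_eq_mul]
              _ = ((2 * t : ℚ) * ((d : ℚ) * (d : ℚ)) ^ (2 * t) * (2 : ℚ) ^ (t - 1) /
                  (C : ℚ) ^ t) * N₀ := by
                  rw [hA]
                  ring
              _ ≤ ((16 : ℚ)⁻¹) ^ t * N₀ := mul_le_mul_of_nonneg_right key2 hN₀nn
        _ = (∑ t ∈ Icc 1 (Fintype.card V), ((16 : ℚ)⁻¹) ^ t) * N₀ := by rw [sum_mul]
        _ ≤ (1 / 15 : ℚ) * N₀ := mul_le_mul_of_nonneg_right (geo _) hN₀nn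
    have h2 : 2 * #Bad ≤ N₀ := by
      have h2Q : ((2 * #Bad : ℕ) : ℚ) ≤ (N₀ : ℚ) := by
        push_cast
        linarith
      exact_mod_cast h2Q
    omega

end Key


section Assemble

lemma exists_nbr {V : Type} [Nonempty V] (G : SimpleGraph V) {d : ℕ}
    (hdeg : ∀ v : V, (G.neighborSet v).Finite ∧ (G.neighborSet v).ncard ≤ d) :
    ∃ f : V → Fin d → V, ∀ u w, G.Adj u w → ∃ k, f u k = w := by
  refine ⟨fun u k => (hdeg u).1.toFinset.toList.getD k (Classical.arbitrary V), ?_⟩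
  intro u w hadj
  have hw : w ∈ (hdeg u).1.toFinset.toList := by
    rw [Finset.mem_toList, Set.Finite.mem_toFinset]
    exact hadj
  obtain ⟨i, hilen, hival⟩ := List.mem_iff_getElem.1 hw
  have hlen : (hdeg u).1.toFinset.toList.length ≤ d := by
    rw [Finset.length_toList]
    have h2 := (hdeg u).2
    rwa [Set.ncard_eq_toFinset_card _ (hdeg u).1] at h2
  refine ⟨⟨i, lt_of_lt_of_le hilen hlen⟩, ?_⟩
  show (hdeg u).1.toFinset.toList.getD i (Classical.arbitrary V) = w
  rw [List.getD_eq_getElem _ _ hilen]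
  exact hival

theorem finite_main {V : Type} [Fintype V] (G : SimpleGraph V) {d : ℕ} (hd : 1 ≤ d)
    (hdeg : ∀ v : V, (G.neighborSet v).ncard ≤ d) :
    ∃ c : V → Fin (64 * d ^ 4), Nonrepetitive G c := by
  classical
  cases isEmpty_or_nonempty V with
  | inl hV => exact ⟨fun v => isEmptyElim v, fun n hn x => isEmptyElim (x 0)⟩
  | inr hV =>
    obtain ⟨f, hf⟩ := exists_nbr G (fun v => ⟨Set.toFinite _, hdeg v⟩)
    have hkey : ∀ S : Finset V, ∀ v ∈ S,
        Ncnt G (64 * d ^ 4) (S.erase v) ≤ 2 * Ncnt G (64 * d ^ 4) S :=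
      fun S v hv => key hd f hf S.card S le_rfl v hv
    have chain : ∀ B S : Finset V, B ⊆ S →
        Ncnt G (64 * d ^ 4) (S \ B) ≤ 2 ^ B.card * Ncnt G (64 * d ^ 4) S := by
      intro B
      induction B using Finset.induction_on with
      | empty => intro S _; simp
      | @insert u B hu ihB =>
        intro S hsub
        rw [sdiff_insert]
        have husub : u ∈ S \ B := mem_sdiff.2 ⟨hsub (mem_insert_self u B), hu⟩
        calc Ncnt G (64 * d ^ 4) ((S \ B).erase u) ≤ 2 * Ncnt G (64 * d ^ 4) (S \ B) :=
              hkey _ u husub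
          _ ≤ 2 * (2 ^ B.card * Ncnt G (64 * d ^ 4) S) :=
              Nat.mul_le_mul_left _ (ihB S (fun a ha => hsub (mem_insert_of_mem ha)))
          _ = 2 ^ (insert u B).card * Ncnt G (64 * d ^ 4) S := by
              rw [card_insert_of_notMem hu, pow_succ]
              ring
    have hpos : 0 < Ncnt G (64 * d ^ 4) (univ : Finset V) := by
      have h1 := chain univ univ (subset_refl _)
      rw [sdiff_self, bot_eq_empty, ncnt_empty] at h1
      have hC : 0 < 64 * d ^ 4 := by positivity
      by_contra h0
      push_neg at h0
      rw [Nat.le_zero] at h0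
      rw [h0, Nat.mul_zero, Nat.le_zero] at h1
      have := pow_pos hC (Fintype.card V)
      omega
    rw [Ncnt, card_pos] at hpos
    obtain ⟨c, hc⟩ := hpos
    rw [mem_filter] at hc
    exact ⟨c, fun n hn x hinj hadj => hc.2 n hn x hinj hadj (fun i _ => mem_univ _)⟩

end Assemble

end NonrepAux

/-- for every `d ≥ 1` there is a constant `C(d)` such that every simple graph
(finite or infinite) with all vertex degrees at most `d` admits a nonrepetitive vertex
coloring with `C(d)` colors. -/
theorem exists_nonrepetitive_coloring_of_degree_bound :
    ∀ d : ℕ, 1 ≤ d → ∃ C : ℕ, ∀ (V : Type) (G : SimpleGraph V),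
      (∀ v : V, (G.neighborSet v).Finite ∧ (G.neighborSet v).ncard ≤ d) →
      ∃ c : V → Fin C, Nonrepetitive G c := by
  classical
  intro d hd
  refine ⟨64 * d ^ 4, ?_⟩
  intro V G hdeg
  have hCpos : 0 < 64 * d ^ 4 := by positivity
  open Finset NonrepAux in
  -- the family of closed constraint sets
  let F : ((n : ℕ) × (ℕ → V)) → Set (V → Fin (64 * d ^ 4)) := fun p =>
    {c | (0 < p.1 ∧ (∀ i j, i < 2 * p.1 → j < 2 * p.1 → i ≠ j → p.2 i ≠ p.2 j) ∧
          (∀ i, i + 1 < 2 * p.1 → G.Adj (p.2 i) (p.2 (i + 1)))) →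
         ∃ i < p.1, c (p.2 i) ≠ c (p.2 (p.1 + i))}
  have hclosed : ∀ p, IsClosed (F p) := by
    intro p
    by_cases hp : (0 < p.1 ∧ (∀ i j, i < 2 * p.1 → j < 2 * p.1 → i ≠ j → p.2 i ≠ p.2 j) ∧
        (∀ i, i + 1 < 2 * p.1 → G.Adj (p.2 i) (p.2 (i + 1))))
    · have hFp : F p = ⋃ i ∈ (Finset.range p.1 : Finset ℕ),
          {c : V → Fin (64 * d ^ 4) | c (p.2 i) ≠ c (p.2 (p.1 + i))} := by
        ext c
        simp only [F, Set.mem_setOf_eq, Set.mem_iUnion, Finset.mem_range, Set.mem_setOf_eq,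
          exists_prop]
        constructor
        · intro h
          exact h hp
        · intro h _
          exact h
      rw [hFp]
      apply Set.Finite.isClosed_biUnion (Finset.finite_toSet _)
      intro i _
      have heq : {c : V → Fin (64 * d ^ 4) | c (p.2 i) ≠ c (p.2 (p.1 + i))} =
          (fun c : V → Fin (64 * d ^ 4) => (c (p.2 i), c (p.2 (p.1 + i)))) ⁻¹'
            {q : Fin (64 * d ^ 4) × Fin (64 * d ^ 4) | q.1 ≠ q.2} := rfl
      rw [heq]
      exact IsClosed.preimage
        (Continuous.prodMk (continuous_apply _) (continuous_apply _)) (isClosed_discrete _)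
    · have hFp : F p = Set.univ := by
        ext c
        simp only [F, Set.mem_setOf_eq, Set.mem_univ, iff_true]
        intro h
        exact absurd h hp
      rw [hFp]
      exact isClosed_univ
  have hfip : ∀ u : Finset ((n : ℕ) × (ℕ → V)),
      (Set.univ ∩ ⋂ p ∈ u, F p).Nonempty := by
    intro u
    set S : Finset V := u.biUnion (fun p => (Finset.range (2 * p.1)).image p.2) with hS
    -- induced graph on S
    have hdegI : ∀ a : (S : Set V),
        ((SimpleGraph.induce (S : Set V) G).neighborSet a).ncard ≤ d := by
      intro a
      have hsub : (SimpleGraph.induce (S : Set V) G).neighborSet a ⊆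
          Subtype.val ⁻¹' (G.neighborSet a.val) := by
        intro b hb
        simp only [SimpleGraph.neighborSet, Set.mem_setOf_eq, SimpleGraph.comap_adj,
          Function.Embedding.coe_subtype] at hb ⊢
        exact hb
      have hfin : (Subtype.val ⁻¹' (G.neighborSet a.val) : Set (S : Set V)).Finite :=
        Set.Finite.preimage (Set.injOn_of_injective Subtype.val_injective)
          (hdeg a.val).1
      calc ((SimpleGraph.induce (S : Set V) G).neighborSet a).ncard
          ≤ (Subtype.val ⁻¹' (G.neighborSet a.val) : Set (S : Set V)).ncard :=
            Set.ncard_le_ncard hsub hfin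
        _ = (Subtype.val '' (Subtype.val ⁻¹' (G.neighborSet a.val) : Set (S : Set V))).ncard :=
            (Set.ncard_image_of_injective _ Subtype.val_injective).symm
        _ ≤ (G.neighborSet a.val).ncard :=
            Set.ncard_le_ncard (Set.image_preimage_subset _ _) (hdeg a.val).1
        _ ≤ d := (hdeg a.val).2
    obtain ⟨c', hc'⟩ := NonrepAux.finite_main (SimpleGraph.induce (S : Set V) G) hd hdegI
    set c : V → Fin (64 * d ^ 4) := fun v =>
      if h : v ∈ S then c' ⟨v, by simpa using h⟩ else ⟨0, hCpos⟩ with hc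
    have hcc : ∀ (v : V) (h : v ∈ S), c v = c' ⟨v, by simpa using h⟩ := by
      intro v h
      simp only [hc, dif_pos h]
    refine ⟨c, Set.mem_univ _, ?_⟩
    rw [Set.mem_iInter₂]
    intro p hp
    rintro ⟨hn, hinjx, hadjx⟩
    have hxS : ∀ i, i < 2 * p.1 → p.2 i ∈ S := by
      intro i hi
      exact Finset.mem_biUnion.2 ⟨p, hp, Finset.mem_image.2 ⟨i, Finset.mem_range.2 hi, rfl⟩⟩
    have h0S : p.2 0 ∈ S := hxS 0 (by omega)
    set x' : ℕ → (S : Set V) := fun i =>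
      if h : p.2 i ∈ S then ⟨p.2 i, by simpa using h⟩ else ⟨p.2 0, by simpa using h0S⟩ with hx'
    have hx'v : ∀ i, i < 2 * p.1 → (x' i : V) = p.2 i := by
      intro i hi
      simp only [hx', dif_pos (hxS i hi)]
    obtain ⟨i, hi, hne⟩ := hc' p.1 hn x'
      (by
        intro i j hi hj hij heq
        apply hinjx i j hi hj hij
        have := congrArg Subtype.val heq
        rwa [hx'v i hi, hx'v j hj] at this)
      (by
        intro i hi
        show (SimpleGraph.induce (S : Set V) G).Adj (x' i) (x' (i + 1))
        simp only [SimpleGraph.comap_adj, Function.Embedding.coe_subtype]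
        rw [hx'v i (by omega), hx'v (i + 1) hi]
        exact hadjx i hi)
    refine ⟨i, hi, ?_⟩
    have e1 : c (p.2 i) = c' (x' i) := by
      rw [hcc (p.2 i) (hxS i (by omega))]
      congr 1
      exact Subtype.ext (hx'v i (by omega)).symm
    have e2 : c (p.2 (p.1 + i)) = c' (x' (p.1 + i)) := by
      rw [hcc (p.2 (p.1 + i)) (hxS (p.1 + i) (by omega))]
      congr 1
      exact Subtype.ext (hx'v (p.1 + i) (by omega)).symm
    rw [e1, e2]
    exact hne
  obtain ⟨c, -, hc⟩ := IsCompact.inter_iInter_nonempty isCompact_univ F hclosed hfip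
  rw [Set.mem_iInter] at hc
  refine ⟨c, ?_⟩
  intro n hn x hinj hadj
  exact hc ⟨n, x⟩ ⟨hn, hinj, hadj⟩
end

section
/- Let G be a connected simple graph, c a nonrepetitive vertex coloring of G, and θ a graph automorphism of G satisfying c(θ(v)) = c(v) for every vertex v. Then θ fixes some vertex of G. -/
private lemma walk_getVert_dist_le {V : Type*} {G : SimpleGraph V} (hconn : G.Connected)
    {u v : V} (w : G.Walk u v) : ∀ i k, i + k ≤ w.length →
    G.dist (w.getVert i) (w.getVert (i + k)) ≤ k := by
  intro i k
  induction k with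
  | zero => simp [SimpleGraph.dist_self]
  | succ k ih =>
    intro h
    have h1 : i + k < w.length := by omega
    have hadj := w.adj_getVert_succ h1
    calc G.dist (w.getVert i) (w.getVert (i + (k+1)))
        ≤ G.dist (w.getVert i) (w.getVert (i + k)) +
          G.dist (w.getVert (i + k)) (w.getVert (i + k + 1)) := by
          have := hconn.dist_triangle (u := w.getVert i) (v := w.getVert (i + k))
            (w := w.getVert (i + k + 1))
          simpa [Nat.add_assoc] using this
      _ ≤ k + 1 := by
          have h2 : G.dist (w.getVert (i + k)) (w.getVert (i + k + 1)) ≤ 1 :=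
            SimpleGraph.dist_le (SimpleGraph.Walk.cons hadj SimpleGraph.Walk.nil)
          have := ih (by omega)
          omega

/-- a color-preserving automorphism of a connected graph with a nonrepetitive
coloring fixes a vertex. -/
theorem color_preserving_automorphism_has_fixed_point
    {V K : Type*} (G : SimpleGraph V) (hconn : G.Connected)
    (c : V → K) (hc : Nonrepetitive G c)
    (θ : G ≃g G) (hθ : ∀ v : V, c (θ v) = c v) :
    ∃ v : V, θ v = v := by
  by_contra hfix
  push_neg at hfix
  -- choose a vertex minimizing the displacement distance
  have hne : (Set.range (fun v => G.dist v (θ v))).Nonempty := by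
    obtain ⟨v⟩ := hconn.nonempty
    exact ⟨_, ⟨v, rfl⟩⟩
  obtain ⟨a, ha0⟩ := Nat.sInf_mem hne
  set n := sInf (Set.range (fun v => G.dist v (θ v))) with hn
  have ha : G.dist a (θ a) = n := ha0
  have hmin : ∀ v, n ≤ G.dist v (θ v) := fun v => Nat.sInf_le ⟨v, rfl⟩
  have npos : 0 < n := by
    rw [← ha]
    rcases Nat.eq_zero_or_pos (G.dist a (θ a)) with h0 | h
    · exact absurd (((hconn a (θ a)).dist_eq_zero_iff).mp h0).symm (hfix a)
    · exact h
  obtain ⟨w, hw⟩ := hconn.exists_walk_length_eq_dist a (θ a)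
  have hwl : w.length = n := by rw [hw, ha]
  -- lower bound on distances between vertices of the geodesic
  have hlow : ∀ i j, i ≤ j → j ≤ n → j - i ≤ G.dist (w.getVert i) (w.getVert j) := by
    intro i j hij hj
    have h1 : G.dist a (w.getVert i) ≤ i := by
      have := walk_getVert_dist_le hconn w 0 i (by omega)
      simpa [SimpleGraph.Walk.getVert_zero] using this
    have h2 : G.dist (w.getVert j) (θ a) ≤ n - j := by
      have := walk_getVert_dist_le hconn w j (n - j) (by omega)
      have hj' : j + (n - j) = w.length := by omega
      rw [hj'] at this
      simpa [SimpleGraph.Walk.getVert_length] using this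
    have htri : G.dist a (θ a) ≤ G.dist a (w.getVert i) +
        (G.dist (w.getVert i) (w.getVert j) + G.dist (w.getVert j) (θ a)) :=
      le_trans hconn.dist_triangle (by
        exact Nat.add_le_add_left hconn.dist_triangle _)
    rw [ha] at htri
    omega
  have hup : ∀ i j, i ≤ j → j ≤ n → G.dist (w.getVert i) (w.getVert j) ≤ j - i := by
    intro i j hij hj
    have := walk_getVert_dist_le hconn w i (j - i) (by omega)
    have h' : i + (j - i) = j := by omega
    rwa [h'] at this
  -- the repetitive sequence
  set x : ℕ → V := fun i => if i < n then w.getVert i else θ (w.getVert (i - n)) with hx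
  have hxlt : ∀ i, i < n → x i = w.getVert i := by
    intro i hi; simp [hx, hi]
  have hxge : ∀ i, n ≤ i → x i = θ (w.getVert (i - n)) := by
    intro i hi; simp [hx, Nat.not_lt.mpr hi]
  -- injectivity
  have hinj : ∀ i j, i < 2 * n → j < 2 * n → i ≠ j → x i ≠ x j := by
    have key : ∀ i j, i < j → j < 2 * n → x i ≠ x j := by
      intro i j hij hj heq
      rcases lt_or_ge j n with hjn | hjn
      · -- both in first half
        rw [hxlt i (by omega), hxlt j hjn] at heq
        have := hlow i j (by omega) (by omega)
        rw [← heq, SimpleGraph.dist_self] at this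
        omega
      · rcases lt_or_ge i n with hin | hin
        · -- mixed case: contradicts minimality
          rw [hxlt i hin, hxge j hjn] at heq
          set k := j - n with hk
          have hkn : k < n := by omega
          have hd : n ≤ G.dist (w.getVert k) (θ (w.getVert k)) := hmin _
          rw [← heq] at hd
          rcases lt_trichotomy i k with h | h | h
          · have := hup i k (by omega) (by omega)
            rw [SimpleGraph.dist_comm] at hd
            omega
          · rw [h] at heq
            exact hfix (w.getVert k) heq.symm
          · have := hup k i (by omega) (by omega)
            omega
        · -- both in second half
          rw [hxge i hin, hxge j hjn] at heq
          have heq' : w.getVert (i - n) = w.getVert (j - n) := θ.injective heq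
          have := hlow (i - n) (j - n) (by omega) (by omega)
          rw [← heq', SimpleGraph.dist_self] at this
          omega
    intro i j hi hj hij heq
    rcases lt_or_gt_of_ne hij with h | h
    · exact key i j h hj heq
    · exact key j i h hi heq.symm
  -- adjacency
  have hadj : ∀ i, i + 1 < 2 * n → G.Adj (x i) (x (i + 1)) := by
    intro i hi
    rcases lt_or_ge (i + 1) n with h1 | h1
    · rw [hxlt i (by omega), hxlt (i + 1) h1]
      exact w.adj_getVert_succ (by omega)
    · rcases lt_or_ge i n with h2 | h2
      · -- i + 1 = n
        have hin : i + 1 = n := by omega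
        rw [hxlt i (by omega), hxge (i + 1) (by omega)]
        have hv : θ (w.getVert (i + 1 - n)) = w.getVert (i + 1) := by
          have h0 : i + 1 - n = 0 := by omega
          rw [h0, SimpleGraph.Walk.getVert_zero]
          rw [hin, ← hwl, w.getVert_length]
        rw [hv]
        exact w.adj_getVert_succ (by omega)
      · rw [hxge i h2, hxge (i + 1) (by omega)]
        have h3 : i + 1 - n = (i - n) + 1 := by omega
        rw [h3]
        exact θ.map_adj_iff.mpr (w.adj_getVert_succ (by omega))
  obtain ⟨i, hi, hne'⟩ := hc n npos x hinj hadj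
  apply hne'
  rw [hxlt i hi, hxge (n + i) (by omega)]
  have : n + i - n = i := by omega
  rw [this, hθ]
end
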